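/- arXiv:1103.4025 — 5 statements merged into one kernel-verified Lean document; each statement's English description precedes it below -/
import Mathlib

section
/- Let (W,S) be a Coxeter system with S finite, L a non-negative weight function, and let ℒ_L(W) denote the set of finite sequences (w_1,…,w_n) with L(w_1⋯w_n) = L(w_1)+⋯+L(w_n). Assume W_I is finite for every proper I ⊂ S. Then { x w y : w ∈ 𝒲, (x,w,y) ∈ ℒ_L(W), L(w) = ν_L } equals { x w_λ y : λ with W_λ finite, L(w_λ) = ν_L, (x, w_λ, y) ∈ ℒ_L(W) }, i.e., in the L-additive description of the lowest two-sided cell one may replace arbitrary maximal-weight elements w ∈ 𝒲 by longest elements w_I of parabolic subgroups with L(w_I) = ν_L. -/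
namespace Stmt3

open CoxeterSystem List

variable {B W Γ : Type*} [Group W] [AddCommGroup Γ] [LinearOrder Γ] [IsOrderedAddMonoid Γ]
variable {M : CoxeterMatrix B} (cs : CoxeterSystem M W)

/-- The standard parabolic subgroup `W_I`. -/
def par (I : Set B) : Subgroup W := Subgroup.closure (cs.simple '' I)

/-- `w` is a longest element of `W_I`. -/
def IsLongest (I : Set B) (w : W) : Prop :=
  w ∈ par cs I ∧ ∀ v ∈ par cs I, cs.length v ≤ cs.length w

attribute [local instance] Classical.decEq

/-- The underlying function of the sign permutation associated to a simple reflection. -/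
noncomputable def sigmaAux (i : B) : W × ℤˣ → W × ℤˣ :=
  fun p => (cs.simple i * p.1 * cs.simple i, if p.1 = cs.simple i then -p.2 else p.2)

lemma simple_conj_eq_simple_iff (i : B) (t : W) :
    (cs.simple i * t * cs.simple i = cs.simple i) ↔ (t = cs.simple i) := by
  constructor
  · intro h
    have h2 : cs.simple i * (cs.simple i * t * cs.simple i) * cs.simple i
        = cs.simple i * cs.simple i * cs.simple i := by rw [h]
    have h1 : cs.simple i * (cs.simple i * t * cs.simple i) * cs.simple i = t := by
      calc cs.simple i * (cs.simple i * t * cs.simple i) * cs.simple i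
          = (cs.simple i * cs.simple i) * t * (cs.simple i * cs.simple i) := by group
        _ = t := by rw [cs.simple_mul_simple_self]; group
    rw [h1] at h2
    rw [h2, cs.simple_mul_simple_self, one_mul]
  · rintro rfl
    rw [cs.simple_mul_simple_self, one_mul]

lemma sigmaAux_involutive (i : B) : Function.Involutive (sigmaAux cs i) := by
  rintro ⟨t, ε⟩
  have h1 : cs.simple i * (cs.simple i * t * cs.simple i) * cs.simple i = t := by
    calc cs.simple i * (cs.simple i * t * cs.simple i) * cs.simple i
        = (cs.simple i * cs.simple i) * t * (cs.simple i * cs.simple i) := by group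
      _ = t := by rw [cs.simple_mul_simple_self]; group
  simp only [sigmaAux, simple_conj_eq_simple_iff]
  by_cases ht : t = cs.simple i
  · simp [ht, h1]
  · simp [ht, h1]

/-- The sign permutation associated to a simple reflection. -/
noncomputable def sigma (i : B) : Equiv.Perm (W × ℤˣ) := (sigmaAux_involutive cs i).toPerm _

lemma sigma_apply (i : B) (t : W) (ε : ℤˣ) :
    sigma cs i (t, ε) = (cs.simple i * t * cs.simple i, if t = cs.simple i then -ε else ε) := rfl

lemma rightInvSeq_cons' (i : B) (ω : List B) :
    cs.rightInvSeq (i :: ω) =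
      ((cs.wordProd ω)⁻¹ * cs.simple i * cs.wordProd ω) :: cs.rightInvSeq ω := rfl

/-- Action of a word through the sign permutations. -/
lemma prod_sigma_apply (ω : List B) (t : W) (ε : ℤˣ) :
    ((ω.map (sigma cs)).prod) (t, ε) =
      (cs.wordProd ω * t * (cs.wordProd ω)⁻¹,
        (-1) ^ (List.count t (cs.rightInvSeq ω)) * ε) := by
  induction ω with
  | nil => simp
  | cons i ω ih =>
    rw [List.map_cons, List.prod_cons, Equiv.Perm.mul_apply, ih, sigma_apply,
      rightInvSeq_cons', List.count_cons]
    have hcond : (cs.wordProd ω * t * (cs.wordProd ω)⁻¹ = cs.simple i)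
        ↔ (t = (cs.wordProd ω)⁻¹ * cs.simple i * cs.wordProd ω) := by
      constructor
      · intro h; rw [← h]; group
      · intro h; rw [h]; group
    have hfst : cs.simple i * (cs.wordProd ω * t * (cs.wordProd ω)⁻¹) * cs.simple i
        = cs.wordProd (i :: ω) * t * (cs.wordProd (i :: ω))⁻¹ := by
      rw [cs.wordProd_cons, mul_inv_rev, cs.inv_simple]
      group
    by_cases h : t = (cs.wordProd ω)⁻¹ * cs.simple i * cs.wordProd ω
    · rw [if_pos (hcond.mpr h)]
      refine Prod.ext hfst ?_
      simp only [beq_iff_eq, if_pos h.symm, pow_succ]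
      simp [mul_neg, mul_comm, mul_left_comm]
    · rw [if_neg (fun hc => h (hcond.mp hc))]
      refine Prod.ext hfst ?_
      simp only [beq_iff_eq,
        if_neg (fun hc : (cs.wordProd ω)⁻¹ * cs.simple i * cs.wordProd ω = t => h hc.symm),
        add_zero]

lemma sj_mul_P (i j : B) :
    cs.simple j * (cs.simple i * cs.simple j) = (cs.simple i * cs.simple j)⁻¹ * cs.simple j := by
  rw [mul_inv_rev, cs.inv_simple, cs.inv_simple]
  group

lemma simple_right_pow_comm (i j : B) (a : ℕ) :
    cs.simple j * (cs.simple i * cs.simple j) ^ a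
      = ((cs.simple i * cs.simple j) ^ a)⁻¹ * cs.simple j := by
  induction a with
  | zero => simp
  | succ a ih =>
    rw [pow_succ, ← mul_assoc, ih, mul_assoc, sj_mul_P, ← mul_assoc, ← mul_inv_rev, ← pow_succ', pow_succ]

lemma pow_mul_simple_comm (i j : B) (a : ℕ) :
    (cs.simple i * cs.simple j) ^ a * cs.simple j
      = cs.simple j * ((cs.simple i * cs.simple j) ^ a)⁻¹ := by
  have h := simple_right_pow_comm cs i j a
  calc (cs.simple i * cs.simple j) ^ a * cs.simple j
      = (cs.simple i * cs.simple j) ^ a * (cs.simple j * (cs.simple i * cs.simple j) ^ a)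
        * ((cs.simple i * cs.simple j) ^ a)⁻¹ := by group
    _ = (cs.simple i * cs.simple j) ^ a * (((cs.simple i * cs.simple j) ^ a)⁻¹ * cs.simple j)
        * ((cs.simple i * cs.simple j) ^ a)⁻¹ := by rw [h]
    _ = cs.simple j * ((cs.simple i * cs.simple j) ^ a)⁻¹ := by group

lemma pi_alt_add (i j : B) (p : ℕ) :
    cs.wordProd (alternatingWord i j (M i j + p))
      = cs.wordProd (alternatingWord i j (M i j)) * cs.wordProd (alternatingWord i j p) := by
  have hP : (cs.simple i * cs.simple j) ^ (M i j) = 1 := cs.simple_mul_simple_pow i j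
  rw [cs.prod_alternatingWord_eq_mul_pow, cs.prod_alternatingWord_eq_mul_pow,
    cs.prod_alternatingWord_eq_mul_pow]
  set m := M i j with hm
  rcases Nat.even_or_odd m with hme | hmo <;> rcases Nat.even_or_odd p with hpe | hpo
  · rw [if_pos (hme.add hpe), if_pos hme, if_pos hpe, one_mul, one_mul, one_mul, ← pow_add]
    congr 1
    rw [Nat.even_iff] at hme hpe
    omega
  · rw [if_neg (Nat.not_even_iff_odd.mpr (hme.add_odd hpo)), if_pos hme,
      if_neg (Nat.not_even_iff_odd.mpr hpo), one_mul, ← mul_assoc, pow_mul_simple_comm,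
      mul_assoc]
    congr 1
    rw [eq_inv_mul_iff_mul_eq, ← pow_add]
    have he : m / 2 + (m + p) / 2 = m + p / 2 := by
      rw [Nat.even_iff] at hme; rw [Nat.odd_iff] at hpo; omega
    rw [he, pow_add, hP, one_mul]
  · rw [if_neg (Nat.not_even_iff_odd.mpr (hmo.add_even hpe)),
      if_neg (Nat.not_even_iff_odd.mpr hmo), if_pos hpe, one_mul, mul_assoc, ← pow_add]
    congr 2
    rw [Nat.even_iff] at hpe; rw [Nat.odd_iff] at hmo
    omega
  · rw [if_pos (hmo.add_odd hpo), if_neg (Nat.not_even_iff_odd.mpr hmo),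
      if_neg (Nat.not_even_iff_odd.mpr hpo), one_mul]
    have hr : cs.simple j * ((cs.simple i * cs.simple j) ^ (m / 2)) *
        (cs.simple j * (cs.simple i * cs.simple j) ^ (p / 2))
        = ((cs.simple i * cs.simple j) ^ (m / 2))⁻¹ * (cs.simple i * cs.simple j) ^ (p / 2) := by
      rw [simple_right_pow_comm]
      calc ((cs.simple i * cs.simple j) ^ (m/2))⁻¹ * cs.simple j *
            (cs.simple j * (cs.simple i * cs.simple j) ^ (p/2))
          = ((cs.simple i * cs.simple j) ^ (m/2))⁻¹ * (cs.simple j * cs.simple j) *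
            (cs.simple i * cs.simple j) ^ (p/2) := by group
        _ = ((cs.simple i * cs.simple j) ^ (m/2))⁻¹ * (cs.simple i * cs.simple j) ^ (p/2) := by
            rw [cs.simple_mul_simple_self]; group
    rw [hr, eq_inv_mul_iff_mul_eq, ← pow_add]
    have he : m / 2 + (m + p) / 2 = m + p / 2 := by
      rw [Nat.odd_iff] at hmo hpo; omega
    rw [he, pow_add, hP, one_mul]

lemma drop_alternatingWord (i j : B) (k n : ℕ) (h : k ≤ n) :
    List.drop k (alternatingWord i j n) = alternatingWord i j (n - k) := by
  induction n generalizing k with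
  | zero =>
    have : k = 0 := by omega
    subst this
    simp
  | succ n ih =>
    cases k with
    | zero => simp
    | succ k =>
      rw [alternatingWord_succ', List.drop_succ_cons, ih k (by omega)]
      congr 1
      omega

lemma getD_ris_eq (ω : List B) (k : ℕ) (hk : k < ω.length) :
    (cs.rightInvSeq ω).getD k 1
      = (cs.wordProd (ω.drop (k + 1)))⁻¹ * cs.wordProd (ω.drop k) := by
  rw [cs.getD_rightInvSeq]
  have hget : ω[k]? = some ω[k] := by
    rw [List.getElem?_eq_getElem hk]
  rw [hget]
  have hdrop : ω.drop k = ω[k] :: ω.drop (k + 1) := List.drop_eq_getElem_cons hk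
  rw [hdrop, cs.wordProd_cons]
  simp [mul_assoc]

lemma ris_alt_period (i j : B) (k : ℕ) (hk : k < M i j) :
    (cs.rightInvSeq (alternatingWord i j (2 * M i j))).getD k 1
      = (cs.rightInvSeq (alternatingWord i j (2 * M i j))).getD (M i j + k) 1 := by
  set m := M i j with hm
  have hlen : (alternatingWord i j (2 * m)).length = 2 * m := length_alternatingWord i j _
  rw [getD_ris_eq cs _ k (by omega), getD_ris_eq cs _ (m + k) (by omega)]
  rw [drop_alternatingWord i j (k+1) _ (by omega), drop_alternatingWord i j k _ (by omega),
    drop_alternatingWord i j (m+k+1) _ (by omega), drop_alternatingWord i j (m+k) _ (by omega)]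
  have e1 : 2 * m - (k + 1) = m + (m - k - 1) := by omega
  have e2 : 2 * m - k = m + (m - k) := by omega
  have e3 : 2 * m - (m + k + 1) = m - k - 1 := by omega
  have e4 : 2 * m - (m + k) = m - k := by omega
  rw [e1, e2, e3, e4, pi_alt_add, pi_alt_add]
  rw [mul_inv_rev]
  group

lemma count_ris_alt_even (i j : B) (t : W) :
    Even (List.count t (cs.rightInvSeq (alternatingWord i j (2 * M i j)))) := by
  set l := cs.rightInvSeq (alternatingWord i j (2 * M i j)) with hl
  have hlen : l.length = 2 * M i j := by
    rw [hl, length_rightInvSeq, length_alternatingWord]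
  have htd : l.take (M i j) = l.drop (M i j) := by
    apply List.ext_getElem
    · simp [hlen]
      omega
    · intro k h1 h2
      have hk : k < M i j := by
        simp only [List.length_take, hlen] at h1
        omega
      have hk1 : k < l.length := by omega
      have hk2 : M i j + k < l.length := by omega
      rw [List.getElem_take, List.getElem_drop]
      rw [← List.getD_eq_getElem l 1 hk1, ← List.getD_eq_getElem l 1 hk2]
      exact ris_alt_period cs i j k hk
  have : l = l.take (M i j) ++ l.take (M i j) := by
    conv_lhs => rw [← List.take_append_drop (M i j) l]
    rw [htd]
  rw [this, List.count_append]
  exact ⟨_, rfl⟩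

lemma prod_sigma_alt (i j : B) (m : ℕ) :
    (sigma cs i * sigma cs j) ^ m = ((alternatingWord i j (2 * m)).map (sigma cs)).prod := by
  induction m with
  | zero => simp [alternatingWord]
  | succ m ih =>
    have h2 : 2 * (m + 1) = (2 * m) + 1 + 1 := by omega
    have he : Even (2 * m) := even_two_mul m
    have ho : ¬ Even (2 * m + 1) := by simp [Nat.even_add_one, he]
    rw [h2, alternatingWord_succ', alternatingWord_succ', if_neg ho, if_pos he,
      List.map_cons, List.map_cons, List.prod_cons, List.prod_cons, ← ih, pow_succ', mul_assoc]

lemma sigma_liftable : M.IsLiftable (sigma cs) := by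
  intro i j
  rw [prod_sigma_alt]
  apply Equiv.ext
  rintro ⟨t, ε⟩
  rw [prod_sigma_apply]
  have hπ : cs.wordProd (alternatingWord i j (2 * M i j)) = 1 := by
    rw [cs.prod_alternatingWord_eq_mul_pow, if_pos (even_two_mul _), one_mul]
    have h2 : 2 * M i j / 2 = M i j := by omega
    rw [h2, cs.simple_mul_simple_pow]
  rw [hπ, (count_ris_alt_even cs i j t).neg_one_pow]
  simp

/-- Tits' sign representation. -/
noncomputable def phi : W →* Equiv.Perm (W × ℤˣ) := cs.lift ⟨sigma cs, sigma_liftable cs⟩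

lemma phi_simple (i : B) : phi cs (cs.simple i) = sigma cs i := cs.lift_apply_simple _ i

lemma phi_wordProd (ω : List B) : phi cs (cs.wordProd ω) = (ω.map (sigma cs)).prod := by
  rw [CoxeterSystem.wordProd, map_list_prod (phi cs), List.map_map]
  congr 1
  apply List.map_congr_left
  intro b _
  exact phi_simple cs b

/-- The sign of a (would-be) reflection in an element of `W`. -/
noncomputable def eta (w t : W) : ℤˣ := ((phi cs w) (t, 1)).2

lemma eta_wordProd (ω : List B) (t : W) :
    eta cs (cs.wordProd ω) t = (-1) ^ (List.count t (cs.rightInvSeq ω)) := by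
  rw [eta, phi_wordProd, prod_sigma_apply, mul_one]

lemma phi_apply (w t : W) (ε : ℤˣ) : phi cs w (t, ε) = (w * t * w⁻¹, eta cs w t * ε) := by
  obtain ⟨ω, rfl⟩ := cs.wordProd_surjective w
  rw [phi_wordProd, prod_sigma_apply, eta_wordProd]

lemma eta_one (t : W) : eta cs 1 t = 1 := by
  rw [eta, map_one]
  rfl

lemma eta_mul (v u t : W) : eta cs (v * u) t = eta cs v (u * t * u⁻¹) * eta cs u t := by
  have h : phi cs (v * u) (t, 1) = phi cs v (phi cs u (t, 1)) := by
    rw [map_mul]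
    rfl
  rw [phi_apply, phi_apply cs u, phi_apply cs v] at h
  have h2 := congrArg Prod.snd h
  simpa using h2

lemma eta_simple_self (i : B) : eta cs (cs.simple i) (cs.simple i) = -1 := by
  rw [eta, phi_simple, sigma_apply]
  simp

lemma eta_refl_self (t : W) (ht : cs.IsReflection t) : eta cs t t = -1 := by
  obtain ⟨u, i, rfl⟩ := ht
  set t := u * cs.simple i * u⁻¹ with hts
  have key : eta cs u (cs.simple i) * eta cs u⁻¹ t = 1 := by
    have h1 : eta cs (u * u⁻¹) t = 1 := by rw [mul_inv_cancel, eta_one]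
    rw [eta_mul] at h1
    have h2 : u⁻¹ * t * u⁻¹⁻¹ = cs.simple i := by rw [hts]; group
    rwa [h2] at h1
  have hdec : eta cs t t = eta cs (u * cs.simple i) (cs.simple i) * eta cs u⁻¹ t := by
    have h2 : u⁻¹ * t * u⁻¹⁻¹ = cs.simple i := by rw [hts]; group
    have := eta_mul cs (u * cs.simple i) u⁻¹ t
    rw [h2] at this
    rw [hts] at this ⊢
    convert this using 3
  have hdec2 : eta cs (u * cs.simple i) (cs.simple i) = eta cs u (cs.simple i) * (-1) := by
    have := eta_mul cs u (cs.simple i) (cs.simple i)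
    have h3 : cs.simple i * cs.simple i * (cs.simple i)⁻¹ = cs.simple i := by group
    rw [h3, eta_simple_self] at this
    rw [this, mul_comm]
  rw [hdec, hdec2]
  calc eta cs u (cs.simple i) * (-1) * eta cs u⁻¹ t
      = -(eta cs u (cs.simple i) * eta cs u⁻¹ t) := by
        rw [mul_neg_one, neg_mul]
    _ = -1 := by rw [key]

lemma mem_ris_iff_eta {ω : List B} (hω : cs.IsReduced ω) (t : W) :
    t ∈ cs.rightInvSeq ω ↔ eta cs (cs.wordProd ω) t = -1 := by
  rw [eta_wordProd]
  by_cases h : t ∈ cs.rightInvSeq ω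
  · rw [List.count_eq_one_of_mem hω.nodup_rightInvSeq h]
    simp [h]
  · rw [List.count_eq_zero_of_not_mem h]
    simp only [pow_zero, h, iff_false]
    decide

lemma isRightInversion_iff_eta {t : W} (ht : cs.IsReflection t) (w : W) :
    cs.IsRightInversion w t ↔ eta cs w t = -1 := by
  constructor
  · intro hinv
    rcases Int.units_eq_one_or (eta cs w t) with h1 | h1
    · exfalso
      -- η (w t) t = -1, so t is an inversion of w t, i.e. ℓ (w t t) < ℓ (w t)
      have h2 : eta cs (w * t) t = -1 := by
        have h3 : t * t * t⁻¹ = t := by group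
        rw [eta_mul, h3, eta_refl_self cs t ht, h1, one_mul]
      obtain ⟨ω, hred, hπ⟩ := cs.exists_reduced_word' (w * t)
      have h4 : t ∈ cs.rightInvSeq ω := by
        rw [mem_ris_iff_eta cs hred, ← hπ]
        exact h2
      have h5 := cs.isRightInversion_of_mem_rightInvSeq hred h4
      rw [← hπ] at h5
      have h6 : w * t * t = w := by rw [mul_assoc, ht.mul_self, mul_one]
      have h7 := h5.2
      rw [h6] at h7
      exact Nat.lt_asymm hinv.2 h7
    · exact h1
  · intro h1
    obtain ⟨ω, hred, hπ⟩ := cs.exists_reduced_word' w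
    have h4 : t ∈ cs.rightInvSeq ω := by
      rw [mem_ris_iff_eta cs hred, ← hπ]
      exact h1
    have h5 := cs.isRightInversion_of_mem_rightInvSeq hred h4
    rwa [hπ]

lemma length_mul_reflection_lt_iff_eta {t : W} (ht : cs.IsReflection t) (w : W) :
    cs.length (w * t) < cs.length w ↔ eta cs w t = -1 := by
  rw [← isRightInversion_iff_eta cs ht w]
  exact ⟨fun h => ⟨ht, h⟩, fun h => h.2⟩

lemma length_mul_reflection_gt_iff_eta {t : W} (ht : cs.IsReflection t) (w : W) :
    cs.length w < cs.length (w * t) ↔ eta cs w t = 1 := by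
  rcases Int.units_eq_one_or (eta cs w t) with h1 | h1
  · constructor
    · intro _; exact h1
    · intro _
      rcases Nat.lt_or_ge (cs.length w) (cs.length (w * t)) with h | h
      · exact h
      exfalso
      have hne := ht.length_mul_left_ne w
      have hlt : cs.length (w * t) < cs.length w := by omega
      rw [length_mul_reflection_lt_iff_eta cs ht w, h1] at hlt
      exact absurd hlt (by decide)
  · constructor
    · intro h
      exfalso
      have h2 : ¬ (cs.length (w * t) < cs.length w) := by omega
      rw [length_mul_reflection_lt_iff_eta cs ht w] at h2
      exact h2 h1
    · intro h
      rw [h1] at h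
      exact absurd h (by decide)

/-- The strong exchange property. -/
lemma strong_exchange {t : W} (ht : cs.IsReflection t) {w : W}
    (hlt : cs.length (w * t) < cs.length w) {ω : List B} (hred : cs.IsReduced ω)
    (hπ : cs.wordProd ω = w) :
    ∃ k < ω.length, cs.wordProd (ω.eraseIdx k) = w * t := by
  have h1 : t ∈ cs.rightInvSeq ω := by
    rw [mem_ris_iff_eta cs hred, hπ, ← length_mul_reflection_lt_iff_eta cs ht]
    exact hlt
  obtain ⟨k, hk, hkt⟩ := List.getElem_of_mem h1
  rw [length_rightInvSeq] at hk
  refine ⟨k, hk, ?_⟩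
  have h2 : (cs.rightInvSeq ω).getD k 1 = t := by
    rw [List.getD_eq_getElem _ 1 (by rw [length_rightInvSeq]; exact hk), hkt]
  rw [← cs.wordProd_mul_getD_rightInvSeq, h2, hπ]


variable {I : Set B}

lemma wordProd_mem_par {ω : List B} (hω : ∀ b ∈ ω, b ∈ I) : cs.wordProd ω ∈ par cs I := by
  induction ω with
  | nil => simp [one_mem]
  | cons b ω ih =>
    rw [cs.wordProd_cons]
    exact mul_mem (Subgroup.subset_closure ⟨b, hω b List.mem_cons_self, rfl⟩)
      (ih fun c hc => hω c (List.mem_cons_of_mem b hc))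

lemma mem_par_iff {v : W} : v ∈ par cs I ↔ ∃ ω : List B, (∀ b ∈ ω, b ∈ I) ∧ cs.wordProd ω = v := by
  constructor
  · intro hv
    induction hv using Subgroup.closure_induction with
    | mem x hx =>
      obtain ⟨b, hb, rfl⟩ := hx
      exact ⟨[b], by simpa using hb, by simp⟩
    | one => exact ⟨[], by simp, by simp⟩
    | mul x y _ _ hx hy =>
      obtain ⟨ω₁, h₁, rfl⟩ := hx
      obtain ⟨ω₂, h₂, rfl⟩ := hy
      exact ⟨ω₁ ++ ω₂, by
        intro b hb
        rcases List.mem_append.mp hb with h | h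
        exacts [h₁ b h, h₂ b h], by rw [cs.wordProd_append]⟩
    | inv x _ hx =>
      obtain ⟨ω, h₁, rfl⟩ := hx
      exact ⟨ω.reverse, fun b hb => h₁ b (List.mem_reverse.mp hb), by rw [cs.wordProd_reverse]⟩
  · rintro ⟨ω, hω, rfl⟩
    exact wordProd_mem_par cs hω

lemma exists_reduced_par_word_aux (n : ℕ) :
    ∀ ω : List B, ω.length ≤ n → (∀ b ∈ ω, b ∈ I) →
      ∃ ρ : List B, (∀ b ∈ ρ, b ∈ I) ∧ cs.IsReduced ρ ∧ cs.wordProd ρ = cs.wordProd ω := by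
  induction n with
  | zero =>
    intro ω hlen _
    have : ω = [] := List.length_eq_zero_iff.mp (by omega)
    subst this
    exact ⟨[], by simp, by simp [CoxeterSystem.IsReduced], rfl⟩
  | succ n ih =>
    intro ω hlen hmem
    rcases List.eq_nil_or_concat ω with rfl | ⟨ω', b, rfl⟩
    · exact ⟨[], by simp, by simp [CoxeterSystem.IsReduced], rfl⟩
    · simp only [List.concat_eq_append] at hlen hmem ⊢
      have hmem' : ∀ c ∈ ω', c ∈ I := fun c hc => hmem c (by simp [hc])
      have hb : b ∈ I := hmem b (by simp)
      have hlen' : ω'.length ≤ n := by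
        rw [List.length_append] at hlen
        simp at hlen
        omega
      obtain ⟨ρ, hρI, hρred, hρπ⟩ := ih ω' hlen' hmem'
      have hπ : cs.wordProd (ω' ++ [b]) = cs.wordProd ω' * cs.simple b := by
        rw [cs.wordProd_append]
        simp
      rcases cs.length_mul_simple (cs.wordProd ω') b with hcase | hcase
      · refine ⟨ρ ++ [b], ?_, ?_, ?_⟩
        · intro c hc
          rcases List.mem_append.mp hc with h | h
          · exact hρI c h
          · have : c = b := by simpa using h
            exact this ▸ hb
        · have hthis : cs.wordProd (ρ ++ [b]) = cs.wordProd ρ * cs.simple b := by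
            rw [cs.wordProd_append]; simp
          have hρlen : cs.length (cs.wordProd ρ) = ρ.length := hρred
          rw [CoxeterSystem.IsReduced, hthis, hρπ, hcase, List.length_append]
          rw [hρπ] at hρlen
          simp [hρlen]
        · rw [cs.wordProd_append, cs.wordProd_append, hρπ]
      · -- descent: use strong exchange
        have hlt : cs.length (cs.wordProd ω' * cs.simple b) < cs.length (cs.wordProd ω') := by
          omega
        obtain ⟨k, hk, hkπ⟩ := strong_exchange cs (cs.isReflection_simple b) hlt hρred hρπ
        have hshort : (ρ.eraseIdx k).length ≤ n := by
          rw [List.length_eraseIdx_of_lt hk]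
          have h5 : ρ.length = cs.length (cs.wordProd ω') := by
            rw [← hρπ]
            exact hρred.symm
          have h6 : cs.length (cs.wordProd ω') ≤ ω'.length := cs.length_wordProd_le ω'
          omega
        have hmemE : ∀ c ∈ ρ.eraseIdx k, c ∈ I := fun c hc =>
          hρI c (List.mem_of_mem_eraseIdx hc)
        obtain ⟨ρ', h1, h2, h3⟩ := ih (ρ.eraseIdx k) hshort hmemE
        exact ⟨ρ', h1, h2, by rw [h3, hkπ, ← hπ]⟩

lemma exists_reduced_par_word {v : W} (hv : v ∈ par cs I) :
    ∃ ρ : List B, (∀ b ∈ ρ, b ∈ I) ∧ cs.IsReduced ρ ∧ cs.wordProd ρ = v := by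
  obtain ⟨ω, hω, rfl⟩ := (mem_par_iff cs).mp hv
  exact exists_reduced_par_word_aux cs ω.length ω le_rfl hω

lemma ris_mem_par {ω : List B} (hω : ∀ b ∈ ω, b ∈ I) :
    ∀ t ∈ cs.rightInvSeq ω, t ∈ par cs I := by
  induction ω with
  | nil => simp
  | cons b ω ih =>
    intro t ht
    rw [rightInvSeq_cons'] at ht
    rcases List.mem_cons.mp ht with rfl | h
    · have hmem : cs.wordProd ω ∈ par cs I :=
        wordProd_mem_par cs (fun c hc => hω c (List.mem_cons_of_mem b hc))
      exact mul_mem (mul_mem (inv_mem hmem)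
        (Subgroup.subset_closure ⟨b, hω b List.mem_cons_self, rfl⟩)) hmem
    · exact ih (fun c hc => hω c (List.mem_cons_of_mem b hc)) t h

/-- The set of right inversions of `w`, as reflections with sign `-1`. -/
def Sset (w : W) : Set W := {t : W | cs.IsReflection t ∧ eta cs w t = -1}

lemma sset_wordProd {ω : List B} (hω : cs.IsReduced ω) :
    Sset cs (cs.wordProd ω) = {t : W | t ∈ cs.rightInvSeq ω} := by
  ext t
  constructor
  · rintro ⟨_, hη⟩
    exact (mem_ris_iff_eta cs hω t).mpr hη
  · intro ht
    exact ⟨cs.isReflection_of_mem_rightInvSeq ω ht, (mem_ris_iff_eta cs hω t).mp ht⟩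

lemma sset_finite (w : W) : (Sset cs w).Finite := by
  obtain ⟨ω, hred, rfl⟩ := cs.exists_reduced_word' w
  rw [sset_wordProd cs hred]
  exact (cs.rightInvSeq ω).finite_toSet

lemma ncard_sset (w : W) : (Sset cs w).ncard = cs.length w := by
  obtain ⟨ω, hred, rfl⟩ := cs.exists_reduced_word' w
  rw [sset_wordProd cs hred]
  have h1 : {t : W | t ∈ cs.rightInvSeq ω} = ((cs.rightInvSeq ω).toFinset : Set W) := by
    ext t; simp
  rw [h1, Set.ncard_coe_finset, List.toFinset_card_of_nodup hred.nodup_rightInvSeq,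
    length_rightInvSeq, hred]

/-- Key length additivity: for `w₀` of maximal length in a finite standard parabolic subgroup
and `v` in that subgroup, `ℓ(v) + ℓ(v⁻¹w₀) = ℓ(w₀)`. -/
lemma length_add_length_inv_mul_longest (hfin : ((par cs I : Set W)).Finite)
    {w₀ : W} (hw₀ : w₀ ∈ par cs I) (hmax : ∀ v ∈ par cs I, cs.length v ≤ cs.length w₀)
    {v : W} (hv : v ∈ par cs I) :
    cs.length v + cs.length (v⁻¹ * w₀) = cs.length w₀ := by
  set u := v⁻¹ * w₀ with hu
  have huI : u ∈ par cs I := mul_mem (inv_mem hv) hw₀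
  have hvu : v * u = w₀ := by rw [hu]; group
  -- reflections of the parabolic subgroup
  set T : Set W := {t : W | t ∈ par cs I ∧ cs.IsReflection t} with hT
  have hTfin : T.Finite := hfin.subset (fun t ht => ht.1)
  -- Sset of elements of par I are inside T
  have hsub : ∀ z ∈ par cs I, Sset cs z ⊆ T := by
    intro z hz t ht
    obtain ⟨ρ, hρI, hρred, hρπ⟩ := exists_reduced_par_word cs hz
    have : t ∈ cs.rightInvSeq ρ := by
      rw [mem_ris_iff_eta cs hρred, hρπ]
      exact ht.2
    exact ⟨ris_mem_par cs hρI t this, ht.1⟩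
  -- T is inside Sset w₀ by maximality
  have hTS : T ⊆ Sset cs w₀ := by
    rintro t ⟨htI, htrefl⟩
    refine ⟨htrefl, ?_⟩
    rcases Int.units_eq_one_or (eta cs w₀ t) with h1 | h1
    · exfalso
      have hgt : cs.length w₀ < cs.length (w₀ * t) :=
        (length_mul_reflection_gt_iff_eta cs htrefl w₀).mpr h1
      have hle : cs.length (w₀ * t) ≤ cs.length w₀ := hmax _ (mul_mem hw₀ htI)
      omega
    · exact h1
  -- decompose Sset w₀
  set A : Set W := Sset cs u with hA
  set Bs : Set W := (fun r => u⁻¹ * r * u) '' Sset cs v with hBs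
  have hBmem : ∀ t : W, t ∈ Bs ↔ (cs.IsReflection t ∧ eta cs v (u * t * u⁻¹) = -1) := by
    intro t
    constructor
    · rintro ⟨r, hr, rfl⟩
      constructor
      · have := hr.1.conj u⁻¹
        simpa using this
      · have : u * (u⁻¹ * r * u) * u⁻¹ = r := by group
        rw [this]
        exact hr.2
    · rintro ⟨htrefl, hη⟩
      refine ⟨u * t * u⁻¹, ⟨?_, hη⟩, by group⟩
      exact htrefl.conj u
  have hAT : A ⊆ T := hsub u huI
  have hBT : Bs ⊆ T := by
    rintro t ⟨r, hr, rfl⟩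
    have hrT : r ∈ T := hsub v hv hr
    exact ⟨mul_mem (mul_mem (inv_mem huI) hrT.1) huI,
      by simpa using hrT.2.conj u⁻¹⟩
  have hdisj : Disjoint A Bs := by
    rw [Set.disjoint_left]
    rintro t htA htB
    have h1 : eta cs w₀ t = 1 := by
      rw [← hvu, eta_mul, (hBmem t).mp htB |>.2, htA.2]
      decide
    have h2 : eta cs w₀ t = -1 := (hTS (hAT htA)).2
    rw [h1] at h2
    exact absurd h2 (by decide)
  have hunion : Sset cs w₀ = A ∪ Bs := by
    apply Set.eq_of_subset_of_subset
    · rintro t ⟨htrefl, hη⟩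
      rw [← hvu, eta_mul] at hη
      rcases Int.units_eq_one_or (eta cs u t) with h1 | h1
      · right
        rw [(hBmem t)]
        refine ⟨htrefl, ?_⟩
        rw [h1, mul_one] at hη
        exact hη
      · left
        exact ⟨htrefl, h1⟩
    · intro t ht
      rcases ht with h | h
      exacts [hTS (hAT h), hTS (hBT h)]
  have hcardB : Bs.ncard = cs.length v := by
    have hinj : Function.Injective (fun r : W => u⁻¹ * r * u) := by
      intro a b hab
      simp only at hab
      have : u * (u⁻¹ * a * u) * u⁻¹ = u * (u⁻¹ * b * u) * u⁻¹ := by rw [hab]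
      calc a = u * (u⁻¹ * a * u) * u⁻¹ := by group
        _ = u * (u⁻¹ * b * u) * u⁻¹ := this
        _ = b := by group
    rw [hBs, Set.ncard_image_of_injective _ hinj, ncard_sset]
  have hcardA : A.ncard = cs.length u := ncard_sset cs u
  have : (Sset cs w₀).ncard = A.ncard + Bs.ncard := by
    rw [hunion]
    exact Set.ncard_union_eq hdisj (hTfin.subset hAT) (hTfin.subset hBT)
  rw [ncard_sset, hcardA, hcardB] at this
  omega

section Weight

variable (L : W → Γ)

lemma L_one
    (hweight : ∀ u v : W, cs.length (u * v) = cs.length u + cs.length v →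
      L (u * v) = L u + L v) : L 1 = 0 := by
  have h := hweight 1 1 (by simp)
  rw [mul_one] at h
  exact (left_eq_add.mp h)

lemma L_nonneg
    (hweight : ∀ u v : W, cs.length (u * v) = cs.length u + cs.length v →
      L (u * v) = L u + L v)
    (hnonneg : ∀ i : B, 0 ≤ L (cs.simple i)) (w : W) : 0 ≤ L w := by
  suffices h : ∀ n w, cs.length w ≤ n → 0 ≤ L w from h (cs.length w) w le_rfl
  intro n
  induction n with
  | zero =>
    intro w hw
    have : w = 1 := cs.length_eq_zero_iff.mp (by omega)
    rw [this, L_one cs L hweight]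
  | succ n ih =>
    intro w hlen
    by_cases hw1 : w = 1
    · rw [hw1, L_one cs L hweight]
    obtain ⟨i, hi⟩ := cs.exists_leftDescent_of_ne_one hw1
    have hi' := cs.isLeftDescent_iff.mp hi
    have hsplit : cs.length (cs.simple i * (cs.simple i * w))
        = cs.length (cs.simple i) + cs.length (cs.simple i * w) := by
      rw [cs.simple_mul_simple_cancel_left, cs.length_simple]
      omega
    have heq := hweight (cs.simple i) (cs.simple i * w) hsplit
    rw [cs.simple_mul_simple_cancel_left] at heq
    have h1 := ih (cs.simple i * w) (by omega)
    have h2 := hnonneg i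
    rw [heq]
    exact add_nonneg h2 h1

lemma L_inv
    (hweight : ∀ u v : W, cs.length (u * v) = cs.length u + cs.length v →
      L (u * v) = L u + L v) (w : W) : L w⁻¹ = L w := by
  suffices h : ∀ n w, cs.length w ≤ n → L w⁻¹ = L w from h (cs.length w) w le_rfl
  intro n
  induction n with
  | zero =>
    intro w hw
    have : w = 1 := cs.length_eq_zero_iff.mp (by omega)
    rw [this, inv_one]
  | succ n ih =>
    intro w hlen
    by_cases hw1 : w = 1
    · rw [hw1, inv_one]
    obtain ⟨i, hi⟩ := cs.exists_leftDescent_of_ne_one hw1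
    have hi' := cs.isLeftDescent_iff.mp hi
    set w' := cs.simple i * w with hw'
    have hww' : w = cs.simple i * w' := by rw [hw', cs.simple_mul_simple_cancel_left]
    have hsplit : cs.length (cs.simple i * w')
        = cs.length (cs.simple i) + cs.length w' := by
      rw [← hww', cs.length_simple]
      omega
    have heq := hweight (cs.simple i) w' hsplit
    rw [← hww'] at heq
    have hw'inv : w'⁻¹ * cs.simple i = w⁻¹ := by
      rw [hw', mul_inv_rev, cs.inv_simple, mul_assoc, cs.simple_mul_simple_self, mul_one]
    have hsplit2 : cs.length (w'⁻¹ * cs.simple i)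
        = cs.length w'⁻¹ + cs.length (cs.simple i) := by
      rw [hw'inv, cs.length_inv, cs.length_inv, cs.length_simple]
      omega
    have heq2 := hweight w'⁻¹ (cs.simple i) hsplit2
    rw [← hw'inv, heq2, ih w' (by omega), heq]
    exact add_comm _ _

lemma L_simple_zero_mul
    (hweight : ∀ u v : W, cs.length (u * v) = cs.length u + cs.length v →
      L (u * v) = L u + L v)
    {i : B} (hL : L (cs.simple i) = 0) (z : W) : L (cs.simple i * z) = L z := by
  rcases cs.length_simple_mul z i with hc | hc
  · have := hweight (cs.simple i) z (by rw [hc, cs.length_simple]; omega)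
    rw [this, hL, zero_add]
  · have hsplit : cs.length (cs.simple i * (cs.simple i * z))
        = cs.length (cs.simple i) + cs.length (cs.simple i * z) := by
      rw [cs.simple_mul_simple_cancel_left, cs.length_simple]
      omega
    have := hweight (cs.simple i) (cs.simple i * z) hsplit
    rw [cs.simple_mul_simple_cancel_left] at this
    rw [this, hL, zero_add]

lemma L_zero_mul
    (hweight : ∀ u v : W, cs.length (u * v) = cs.length u + cs.length v →
      L (u * v) = L u + L v)
    (hnonneg : ∀ i : B, 0 ≤ L (cs.simple i))
    {a : W} (hL : L a = 0) (z : W) : L (a * z) = L z := by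
  suffices h : ∀ n a, cs.length a ≤ n → L a = 0 → ∀ z, L (a * z) = L z from
    h (cs.length a) a le_rfl hL z
  intro n
  induction n with
  | zero =>
    intro a hlen _ z
    have : a = 1 := cs.length_eq_zero_iff.mp (by omega)
    rw [this, one_mul]
  | succ n ih =>
    intro a hlen hL0 z
    by_cases ha1 : a = 1
    · rw [ha1, one_mul]
    obtain ⟨i, hi⟩ := cs.exists_leftDescent_of_ne_one ha1
    have hi' := cs.isLeftDescent_iff.mp hi
    set a' := cs.simple i * a with ha'
    have haa' : a = cs.simple i * a' := by rw [ha', cs.simple_mul_simple_cancel_left]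
    have hsplit : cs.length (cs.simple i * a')
        = cs.length (cs.simple i) + cs.length a' := by
      rw [← haa', cs.length_simple]
      omega
    have heq := hweight (cs.simple i) a' hsplit
    rw [← haa'] at heq
    have hs0 : L (cs.simple i) = 0 ∧ L a' = 0 := by
      have h1 := hnonneg i
      have h2 := L_nonneg cs L hweight hnonneg a'
      have hsum : L (cs.simple i) + L a' = 0 := by rw [← heq, hL0]
      have hs1 : L (cs.simple i) = 0 := by
        apply le_antisymm _ h1
        rw [eq_neg_of_add_eq_zero_left hsum]
        simpa using h2
      refine ⟨hs1, ?_⟩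
      rw [hs1, zero_add] at hsum
      exact hsum
    have hz : a * z = cs.simple i * (a' * z) := by rw [haa']; group
    rw [hz, L_simple_zero_mul cs L hweight hs0.1, ih a' (by omega) hs0.2 z]

lemma L_mul_zero
    (hweight : ∀ u v : W, cs.length (u * v) = cs.length u + cs.length v →
      L (u * v) = L u + L v)
    (hnonneg : ∀ i : B, 0 ≤ L (cs.simple i))
    {b : W} (hL : L b = 0) (x : W) : L (x * b) = L x := by
  have h1 : L (x * b) = L ((x * b)⁻¹) := (L_inv cs L hweight (x * b)).symm
  rw [mul_inv_rev] at h1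
  rw [h1, L_zero_mul cs L hweight hnonneg (by rw [L_inv cs L hweight]; exact hL) x⁻¹,
    L_inv cs L hweight]

end Weight

lemma par_univ_eq_top : par cs (Set.univ : Set B) = ⊤ := by
  rw [par, Set.image_univ, cs.subgroup_closure_range_simple]

lemma exists_longest (hfin : ((par cs I : Set W)).Finite) :
    ∃ w₀ : W, w₀ ∈ par cs I ∧ ∀ v ∈ par cs I, cs.length v ≤ cs.length w₀ := by
  have hne : ((par cs I : Set W)).Nonempty := ⟨1, one_mem _⟩
  obtain ⟨w₀, hw₀, hmax⟩ := Set.Finite.exists_maximalFor cs.length _ hfin hne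
  refine ⟨w₀, hw₀, fun v hv => ?_⟩
  by_contra h
  push_neg at h
  have := hmax hv (le_of_lt h)
  omega

/-- Assume `S` is finite and every proper standard parabolic subgroup is
finite.  Then, with `ν = ν_L` the maximal weight of a longest element of a proper
parabolic subgroup, the set
`{ x w y : w ∈ 𝒲, L(xwy) = L x + L w + L y, L w = ν }` coincides with
`{ x w_λ y : w_λ a longest element of some finite parabolic, L w_λ = ν,
   L (x w_λ y) = L x + L w_λ + L y }`. -/
theorem stmt3 [Finite B] (L : W → Γ) (ν : Γ)
    (hweight : ∀ u v : W, cs.length (u * v) = cs.length u + cs.length v →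
      L (u * v) = L u + L v)
    (hnonneg : ∀ i : B, 0 ≤ L (cs.simple i))
    (hproper : ∀ I : Set B, I ≠ Set.univ → ((par cs I : Set W)).Finite)
    (hν₁ : ∃ (I : Set B) (w₀ : W), I ≠ Set.univ ∧ IsLongest cs I w₀ ∧ L w₀ = ν)
    (hν₂ : ∀ (I : Set B) (w₀ : W), I ≠ Set.univ → IsLongest cs I w₀ → L w₀ ≤ ν) :
    {z : W | ∃ x w y : W, (∃ I : Set B, I ≠ Set.univ ∧ w ∈ par cs I) ∧ L w = ν ∧
        z = x * w * y ∧ L (x * w * y) = L x + L w + L y} =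
    {z : W | ∃ (x w₀ y : W) (I : Set B), ((par cs I : Set W)).Finite ∧
        IsLongest cs I w₀ ∧ L w₀ = ν ∧
        z = x * w₀ * y ∧ L (x * w₀ * y) = L x + L w₀ + L y} := by
  ext z
  simp only [Set.mem_setOf_eq]
  constructor
  · rintro ⟨x, w, y, ⟨I, hIne, hwI⟩, hLw, rfl, hadd⟩
    have hfin := hproper I hIne
    obtain ⟨w₀, hw₀mem, hw₀max⟩ := exists_longest cs hfin
    have hQ := length_add_length_inv_mul_longest cs hfin hw₀mem hw₀max hwI
    set b := w⁻¹ * w₀ with hb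
    have hwb : w * b = w₀ := by rw [hb]; group
    have hLsum : L w₀ = L w + L b := by
      have := hweight w b (by rw [hwb]; omega)
      rwa [hwb] at this
    have hw₀ν : L w₀ ≤ ν := hν₂ I w₀ hIne ⟨hw₀mem, hw₀max⟩
    have hbnn : 0 ≤ L b := L_nonneg cs L hweight hnonneg b
    have hb0 : L b = 0 := by
      have h1 : ν + L b ≤ ν := by
        calc ν + L b = L w + L b := by rw [hLw]
          _ = L w₀ := hLsum.symm
          _ ≤ ν := hw₀ν
      exact le_antisymm ((add_le_iff_nonpos_right ν).mp h1) hbnn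
    have hLw₀ : L w₀ = ν := by rw [hLsum, hb0, add_zero, hLw]
    have hzeq : x * w * y = x * w₀ * (b⁻¹ * y) := by
      rw [← hwb]
      group
    refine ⟨x, w₀, b⁻¹ * y, I, hfin, ⟨hw₀mem, hw₀max⟩, hLw₀, hzeq, ?_⟩
    rw [← hzeq, hadd, hLw₀, hLw,
      L_zero_mul cs L hweight hnonneg (by rw [L_inv cs L hweight]; exact hb0) y]
  · rintro ⟨x, w₀, y, I, hfin, ⟨hw₀mem, hw₀max⟩, hLw₀, rfl, hadd⟩
    by_cases hI : I = Set.univ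
    · subst hI
      obtain ⟨I₁, w₁, hI₁ne, ⟨hw₁mem, hw₁max⟩, hLw₁⟩ := hν₁
      have hw₁top : w₁ ∈ par cs (Set.univ : Set B) := by
        rw [par_univ_eq_top]
        trivial
      have hQ := length_add_length_inv_mul_longest cs hfin hw₀mem hw₀max hw₁top
      set b := w₁⁻¹ * w₀ with hb
      have hwb : w₁ * b = w₀ := by rw [hb]; group
      have hLsum : L w₀ = L w₁ + L b := by
        have := hweight w₁ b (by rw [hwb]; omega)
        rwa [hwb] at this
      have hb0 : L b = 0 := by
        have h1 : ν + L b = ν := by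
          calc ν + L b = L w₁ + L b := by rw [hLw₁]
            _ = L w₀ := hLsum.symm
            _ = ν := hLw₀
        exact add_eq_left.mp h1
      have hzeq : x * w₀ * y = x * w₁ * (b * y) := by
        rw [← hwb]
        group
      refine ⟨x, w₁, b * y, ⟨I₁, hI₁ne, hw₁mem⟩, hLw₁, hzeq, ?_⟩
      rw [← hzeq, hadd, hLw₀, hLw₁, L_zero_mul cs L hweight hnonneg hb0 y]
    · exact ⟨x, w₀, y, ⟨I, hI, hw₀mem⟩, hLw₀, rfl, hadd⟩

end Stmt3
end

section
/- With the notation of the lowest two-sided cell: c_min^L = { x w y : w ∈ 𝒲, ℓ(xwy)=ℓ(x)+ℓ(w)+ℓ(y), L(w)=ν_L } equals { x w y : w ∈ 𝒲, (x,w,y) ∈ ℒ_L(W), L(w)=ν_L }, i.e., requiring only L-additivity of the triple (x,w,y) instead of length-additivity defines the same set. -/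
namespace Stmt4

variable {B W Γ : Type*} [Group W] [AddCommGroup Γ] [LinearOrder Γ] [IsOrderedAddMonoid Γ]
variable {M : CoxeterMatrix B} (cs : CoxeterSystem M W)

/-- The standard parabolic subgroup `W_I`. -/
def par (I : Set B) : Subgroup W := Subgroup.closure (cs.simple '' I)

/-- `w` is a longest element of `W_I`. -/
def IsLongest (I : Set B) (w : W) : Prop :=
  w ∈ par cs I ∧ ∀ v ∈ par cs I, cs.length v ≤ cs.length w

/-- The Coxeter graph of a Coxeter matrix: vertices are the simple reflections,
with an edge between `i ≠ j` whenever `M i j ≠ 2`. -/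
def coxeterGraph (M : CoxeterMatrix B) : SimpleGraph B where
  Adj i j := i ≠ j ∧ M i j ≠ 2
  symm := by
    constructor
    intro i j ⟨h1, h2⟩
    exact ⟨h1.symm, by rwa [M.symmetric j i]⟩
  loopless := by constructor; intro i ⟨h1, _⟩; exact h1 rfl

open CoxeterSystem List

open scoped Classical

local prefix:100 "σ" => cs.simple
local prefix:100 "π" => cs.wordProd
local prefix:100 "ℓ" => cs.length

open scoped Classical

/-- The standard involution attached to a simple reflection, acting on `W × ZMod 2`. -/
noncomputable def sigmaFun (i : B) : W × ZMod 2 → W × ZMod 2 :=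
  fun p => (σ i * p.1 * σ i, p.2 + if p.1 = σ i then 1 else 0)

lemma sigmaFun_involutive (i : B) : Function.Involutive (sigmaFun cs i) := by
  rintro ⟨w, z⟩
  have hs : σ i * σ i = 1 := cs.simple_mul_simple_self i
  have h1 : σ i * (σ i * w * σ i) * σ i = w := by
    rw [show σ i * (σ i * w * σ i) * σ i = (σ i * σ i) * w * (σ i * σ i) by group, hs,
      one_mul, mul_one]
  have h2 : (σ i * w * σ i = σ i) ↔ (w = σ i) := by
    constructor
    · intro h
      have := congrArg (fun u => σ i * u * σ i) h
      simpa [h1, show σ i * σ i * σ i = σ i by rw [hs, one_mul]] using this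
    · rintro rfl; rw [hs, one_mul]
  have h3 : ∀ x : ZMod 2, x + x = 0 := by decide
  simp only [sigmaFun, h1, h2, Prod.mk.injEq, true_and]
  rcases Classical.em (w = σ i) with h | h <;> simp [h, add_assoc, h3]

/-- The permutation of `W × ZMod 2` attached to a simple reflection. -/
noncomputable def sigmaPerm (i : B) : Equiv.Perm (W × ZMod 2) :=
  (sigmaFun_involutive cs i).toPerm _

lemma sigmaPerm_apply (i : B) (p : W × ZMod 2) : sigmaPerm cs i p = sigmaFun cs i p := rfl

lemma key_conj (i j : B) (u : ℕ) :
    (σ i * σ j)⁻¹ * (σ j * (σ i * σ j) ^ u) * (σ i * σ j)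
      = σ j * (σ i * σ j) ^ (u + 2) := by
  have h1 : (σ i * σ j)⁻¹ * σ j = σ j * (σ i * σ j) := by
    rw [mul_inv_rev, cs.inv_simple, cs.inv_simple, mul_assoc]
  calc (σ i * σ j)⁻¹ * (σ j * (σ i * σ j) ^ u) * (σ i * σ j)
      = ((σ i * σ j)⁻¹ * σ j) * ((σ i * σ j) ^ u * (σ i * σ j)) := by group
    _ = (σ j * (σ i * σ j)) * (σ i * σ j) ^ (u + 1) := by rw [h1, ← pow_succ]
    _ = σ j * ((σ i * σ j) * (σ i * σ j) ^ (u + 1)) := by rw [mul_assoc]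
    _ = σ j * (σ i * σ j) ^ (u + 2) := by rw [← pow_succ']

lemma sigma_pow_apply (i j : B) (k : ℕ) (w : W) (z : ZMod 2) :
    ((sigmaPerm cs i * sigmaPerm cs j) ^ k) (w, z) =
      ((σ i * σ j) ^ k * w * ((σ i * σ j) ^ k)⁻¹,
        z + ∑ u ∈ Finset.range (2 * k),
          (if w = σ j * (σ i * σ j) ^ u then (1 : ZMod 2) else 0)) := by
  have conj_iff : ∀ (t v : W), ((σ i * σ j) * v * (σ i * σ j)⁻¹ = t)
      ↔ v = (σ i * σ j)⁻¹ * t * (σ i * σ j) := by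
    intro t v
    constructor
    · rintro rfl; group
    · rintro rfl; group
  induction k generalizing w z with
  | zero => simp
  | succ k ih =>
    rw [pow_succ, Equiv.Perm.mul_apply]
    have hstep : (sigmaPerm cs i * sigmaPerm cs j) (w, z) =
        ((σ i * σ j) * w * (σ i * σ j)⁻¹,
          z + ((if w = σ j * (σ i * σ j) ^ 0 then (1 : ZMod 2) else 0)
          + (if w = σ j * (σ i * σ j) ^ 1 then (1 : ZMod 2) else 0))) := by
      rw [Equiv.Perm.mul_apply, sigmaPerm_apply, sigmaPerm_apply]
      simp only [sigmaFun]
      have e1 : σ i * (σ j * w * σ j) * σ i = (σ i * σ j) * w * (σ i * σ j)⁻¹ := by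
        rw [mul_inv_rev, cs.inv_simple, cs.inv_simple]; group
      have e2 : (σ j * w * σ j = σ i) ↔ (w = σ j * (σ i * σ j) ^ 1) := by
        rw [pow_one]
        constructor
        · intro h
          have := congrArg (fun u => σ j * u * σ j) h
          rw [show σ j * (σ j * w * σ j) * σ j = (σ j * σ j) * w * (σ j * σ j) by group,
            cs.simple_mul_simple_self, one_mul, mul_one] at this
          rw [this, mul_assoc]
        · rintro rfl
          rw [show σ j * (σ j * (σ i * σ j)) * σ j = (σ j * σ j) * σ i * (σ j * σ j) by group,
            cs.simple_mul_simple_self, one_mul, mul_one]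
      have e3 : (w = σ j) ↔ (w = σ j * (σ i * σ j) ^ 0) := by rw [pow_zero, mul_one]
      rw [e1]
      congr 1
      rw [if_congr e3 rfl rfl]
      simp only [e2]
      ring
    rw [hstep, ih]
    simp only [Prod.mk.injEq]
    constructor
    · rw [show (σ i * σ j) ^ (k + 1) = (σ i * σ j) ^ k * (σ i * σ j) by rw [pow_succ]]
      group
    have hre : ∀ u : ℕ,
        (if (σ i * σ j) * w * (σ i * σ j)⁻¹ = σ j * (σ i * σ j) ^ u then (1 : ZMod 2) else 0)
        = (if w = σ j * (σ i * σ j) ^ (u + 2) then (1 : ZMod 2) else 0) := by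
      intro u
      refine if_congr ?_ rfl rfl
      rw [conj_iff, key_conj]
    simp only [hre]
    have hsplit : ∑ u ∈ Finset.range (2 * (k + 1)),
        (if w = σ j * (σ i * σ j) ^ u then (1 : ZMod 2) else 0)
        = ((if w = σ j * (σ i * σ j) ^ 0 then (1 : ZMod 2) else 0)
          + (if w = σ j * (σ i * σ j) ^ 1 then (1 : ZMod 2) else 0))
          + ∑ u ∈ Finset.range (2 * k),
              (if w = σ j * (σ i * σ j) ^ (u + 2) then (1 : ZMod 2) else 0) := by
      rw [show 2 * (k + 1) = 2 + 2 * k by ring, Finset.sum_range_add]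
      congr 1
      · rw [Finset.sum_range_succ, Finset.sum_range_succ, Finset.sum_range_zero, zero_add]
      · exact Finset.sum_congr rfl fun x _ => by rw [Nat.add_comm 2 x]
    rw [hsplit]
    ring

lemma sigma_liftable : CoxeterMatrix.IsLiftable M (fun i => sigmaPerm cs i) := by
  intro i j
  ext ⟨w, z⟩ : 1
  rw [Equiv.Perm.one_apply, sigma_pow_apply]
  have hm : (σ i * σ j) ^ M i j = 1 := cs.simple_mul_simple_pow i j
  have hsum : ∑ u ∈ Finset.range (2 * M i j),
      (if w = σ j * (σ i * σ j) ^ u then (1 : ZMod 2) else 0) = 0 := by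
    rw [show 2 * M i j = M i j + M i j by ring, Finset.sum_range_add]
    have hper : ∀ u : ℕ, (σ i * σ j) ^ (M i j + u) = (σ i * σ j) ^ u := by
      intro u; rw [pow_add, hm, one_mul]
    simp only [hper]
    exact (by decide : ∀ x : ZMod 2, x + x = 0) _
  rw [hm, hsum]
  simp

/-- The sign representation on `W × ZMod 2`. -/
noncomputable def permRep : W →* Equiv.Perm (W × ZMod 2) :=
  cs.lift ⟨fun i => sigmaPerm cs i, sigma_liftable cs⟩

lemma permRep_simple (i : B) : permRep cs (σ i) = sigmaPerm cs i :=
  cs.lift_apply_simple (sigma_liftable cs) i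

/-- `ZMod 2`-valued count of occurrences of `t` in a list. -/
noncomputable def cnt (t : W) (l : List W) : ZMod 2 :=
  (l.map fun u => if u = t then (1 : ZMod 2) else 0).sum

lemma cnt_nil (t : W) : cnt t ([] : List W) = 0 := by simp [cnt]

lemma cnt_cons (t a : W) (l : List W) :
    cnt t (a :: l) = (if a = t then (1 : ZMod 2) else 0) + cnt t l := by simp [cnt]

lemma cnt_eq_zero_of_not_mem {t : W} {l : List W} (h : t ∉ l) : cnt t l = 0 := by
  induction l with
  | nil => simp [cnt_nil]
  | cons a l ih =>
    rw [cnt_cons, if_neg, ih (fun hh => h (List.mem_cons_of_mem a hh)), add_zero]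
    rintro rfl
    exact h List.mem_cons_self

lemma permRep_wordProd (ω : List B) (t : W) (z : ZMod 2) :
    permRep cs (π ω) (t, z) = (π ω * t * (π ω)⁻¹, z + cnt t (cs.rightInvSeq ω)) := by
  induction ω generalizing z with
  | nil => simp [cnt_nil]
  | cons i ψ ih =>
    have hris : cs.rightInvSeq (i :: ψ) = ((π ψ)⁻¹ * σ i * π ψ) :: cs.rightInvSeq ψ := rfl
    rw [cs.wordProd_cons, map_mul, Equiv.Perm.mul_apply, ih, permRep_simple, sigmaPerm_apply]
    simp only [sigmaFun]
    have e1 : σ i * (π ψ * t * (π ψ)⁻¹) * σ i = (σ i * π ψ) * t * (σ i * π ψ)⁻¹ := by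
      rw [mul_inv_rev, cs.inv_simple]; group
    have e2 : (π ψ * t * (π ψ)⁻¹ = σ i) ↔ ((π ψ)⁻¹ * σ i * π ψ = t) := by
      constructor
      · intro h; rw [← h]; group
      · intro h; rw [← h]; group
    rw [e1, hris, cnt_cons]
    refine congrArg _ ?_
    rw [if_congr e2 rfl rfl]
    ring

/-- The reflection cocycle. -/
noncomputable def eta (w t : W) : ZMod 2 := (permRep cs w (t, 0)).2

lemma eta_eq_cnt (ω : List B) (t : W) : eta cs (π ω) t = cnt t (cs.rightInvSeq ω) := by
  unfold eta
  rw [permRep_wordProd, zero_add]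

lemma permRep_apply (w t : W) (z : ZMod 2) :
    permRep cs w (t, z) = (w * t * w⁻¹, z + eta cs w t) := by
  obtain ⟨ω, rfl⟩ := cs.wordProd_surjective w
  rw [permRep_wordProd, eta_eq_cnt]

lemma eta_mul (a b t : W) : eta cs (a * b) t = eta cs b t + eta cs a (b * t * b⁻¹) := by
  show (permRep cs (a * b) (t, 0)).2 = _
  rw [map_mul, Equiv.Perm.mul_apply, permRep_apply cs b t 0, permRep_apply cs a _ _, zero_add]

lemma eta_simple_self (i : B) : eta cs (σ i) (σ i) = 1 := by
  unfold eta
  rw [permRep_simple, sigmaPerm_apply]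
  simp [sigmaFun]

lemma eta_one (t : W) : eta cs 1 t = 0 := by
  unfold eta
  rw [map_one]
  rfl

lemma eta_reflection_self (v : W) (i : B) :
    eta cs (v * σ i * v⁻¹) (v * σ i * v⁻¹) = 1 := by
  set t := v * σ i * v⁻¹ with ht
  have hA : eta cs t t = eta cs (σ i * v⁻¹) t + eta cs v (σ i) := by
    have h0 : t = v * (σ i * v⁻¹) := by rw [ht, mul_assoc]
    have h1 : (σ i * v⁻¹) * t * (σ i * v⁻¹)⁻¹ = σ i := by rw [ht]; group
    calc eta cs t t = eta cs (v * (σ i * v⁻¹)) t := by rw [← h0]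
      _ = eta cs (σ i * v⁻¹) t + eta cs v ((σ i * v⁻¹) * t * (σ i * v⁻¹)⁻¹) := eta_mul ..
      _ = eta cs (σ i * v⁻¹) t + eta cs v (σ i) := by rw [h1]
  have hB : eta cs (σ i * v⁻¹) t = eta cs v⁻¹ t + 1 := by
    have h1 : v⁻¹ * t * (v⁻¹)⁻¹ = σ i := by rw [ht]; group
    calc eta cs (σ i * v⁻¹) t
        = eta cs v⁻¹ t + eta cs (σ i) (v⁻¹ * t * (v⁻¹)⁻¹) := eta_mul ..
      _ = eta cs v⁻¹ t + 1 := by rw [h1, eta_simple_self]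
  have hC : eta cs v⁻¹ t = eta cs v (σ i) := by
    have h1 : v⁻¹ * t * (v⁻¹)⁻¹ = σ i := by rw [ht]; group
    have h2 : (0 : ZMod 2) = eta cs v⁻¹ t + eta cs v (σ i) := by
      calc (0 : ZMod 2) = eta cs 1 t := (eta_one cs t).symm
        _ = eta cs (v * v⁻¹) t := by rw [mul_inv_cancel]
        _ = eta cs v⁻¹ t + eta cs v (v⁻¹ * t * (v⁻¹)⁻¹) := eta_mul ..
        _ = eta cs v⁻¹ t + eta cs v (σ i) := by rw [h1]
    exact (by decide : ∀ x y : ZMod 2, 0 = x + y → x = y) _ _ h2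
  rw [hA, hB, hC]
  exact (by decide : ∀ x : ZMod 2, x + 1 + x = 1) _

lemma exists_eraseIdx_of_eta_eq_one {ω : List B} {t : W}
    (h : eta cs (π ω) t = 1) : ∃ n < ω.length, π ω * t = π (ω.eraseIdx n) := by
  rw [eta_eq_cnt] at h
  have hmem : t ∈ cs.rightInvSeq ω := by
    by_contra hmem
    rw [cnt_eq_zero_of_not_mem hmem] at h
    exact (by decide : (0 : ZMod 2) ≠ 1) h
  obtain ⟨n, hn, hget⟩ := List.mem_iff_getElem.mp hmem
  have hn' : n < ω.length := by rwa [cs.length_rightInvSeq] at hn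
  refine ⟨n, hn', ?_⟩
  rw [← cs.wordProd_mul_getD_rightInvSeq ω n]
  congr 1
  rw [List.getD_eq_getElem _ 1 hn, hget]

lemma length_mul_lt_of_eta_eq_one {w t : W} (h : eta cs w t = 1) :
    ℓ (w * t) < ℓ w := by
  obtain ⟨ω, hlen, hw⟩ := cs.exists_reduced_word w
  subst hw
  obtain ⟨n, hn, heq⟩ := exists_eraseIdx_of_eta_eq_one cs h
  calc ℓ (π ω * t) = ℓ (π (ω.eraseIdx n)) := by rw [heq]
    _ ≤ (ω.eraseIdx n).length := cs.length_wordProd_le _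
    _ < ω.length := by
        have := List.length_eraseIdx_add_one hn
        omega
    _ = ℓ (π ω) := hlen.symm

lemma eta_eq_one_of_length_lt (v : W) (i : B) (w : W)
    (h : ℓ (w * (v * σ i * v⁻¹)) < ℓ w) : eta cs w (v * σ i * v⁻¹) = 1 := by
  set t := v * σ i * v⁻¹ with ht
  have htt : t * t = 1 := by
    rw [show t * t = v * (σ i * σ i) * v⁻¹ by rw [ht]; group,
      cs.simple_mul_simple_self, mul_one, mul_inv_cancel]
  have htinv : t⁻¹ = t := by
    rw [ht, mul_inv_rev, mul_inv_rev, cs.inv_simple, inv_inv, mul_assoc]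
  have hmul : eta cs (w * t) t = 1 + eta cs w t := by
    calc eta cs (w * t) t = eta cs t t + eta cs w (t * t * t⁻¹) := eta_mul ..
      _ = 1 + eta cs w t := by rw [htt, one_mul, htinv, eta_reflection_self]
  rcases (by decide : ∀ x : ZMod 2, x = 0 ∨ x = 1) (eta cs w t) with h0 | h1
  · exfalso
    rw [h0, add_zero] at hmul
    have := length_mul_lt_of_eta_eq_one cs hmul
    rw [mul_assoc, htt, mul_one] at this
    omega
  · exact h1

lemma exists_eraseIdx_of_length_lt (ω : List B) (i : B)
    (h : ℓ (π ω * σ i) < ℓ (π ω)) :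
    ∃ n < ω.length, π ω * σ i = π (ω.eraseIdx n) := by
  have h1 : eta cs (π ω) (σ i) = 1 := by
    have := eta_eq_one_of_length_lt cs 1 i (π ω) (by simpa using h)
    simpa using this
  exact exists_eraseIdx_of_eta_eq_one cs h1

lemma exists_reduced_sublist_aux : ∀ (n : ℕ) (ω : List B), ω.length ≤ n →
    ∃ ω', ω'.Sublist ω ∧ cs.IsReduced ω' ∧ π ω' = π ω := by
  intro n
  induction n with
  | zero =>
    intro ω h
    have : ω = [] := List.eq_nil_of_length_eq_zero (Nat.le_zero.mp h)
    subst this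
    exact ⟨[], List.Sublist.refl _, by simp [CoxeterSystem.IsReduced], rfl⟩
  | succ n ih =>
    intro ω hlen
    by_cases hred : cs.IsReduced ω
    · exact ⟨ω, List.Sublist.refl _, hred, rfl⟩
    · classical
      have hex : ∃ k, ¬ cs.IsReduced (ω.take k) := ⟨ω.length, by rwa [List.take_length]⟩
      have hk₀ : ¬ cs.IsReduced (ω.take (Nat.find hex)) := Nat.find_spec hex
      have hmin : ∀ m, m < Nat.find hex → cs.IsReduced (ω.take m) := fun m hm => by
        have := Nat.find_min hex hm
        exact Classical.not_not.mp this
      have hk₀pos : Nat.find hex ≠ 0 := by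
        intro h0
        rw [h0] at hk₀
        exact hk₀ (by simp [CoxeterSystem.IsReduced])
      obtain ⟨k, hk⟩ := Nat.exists_eq_succ_of_ne_zero hk₀pos
      have hk₀le : Nat.find hex ≤ ω.length := Nat.find_le (by rwa [List.take_length])
      have hklt : k < ω.length := by omega
      rw [hk] at hk₀ hmin
      have htake : ω.take (k+1) = ω.take k ++ [ω[k]] := by
        rw [List.take_succ, List.getElem?_eq_getElem hklt]
        rfl
      have hredk : cs.IsReduced (ω.take k) := hmin k (Nat.lt_succ_self k)
      have hlk : ℓ (π (ω.take k)) = k := by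
        rw [hredk, List.length_take]
        omega
      have hprod : π (ω.take (k+1)) = π (ω.take k) * σ (ω[k]) := by
        rw [htake, cs.wordProd_append, cs.wordProd_singleton]
      have hne : ℓ (π (ω.take (k+1))) ≠ k + 1 := by
        intro hc
        exact hk₀ (by rw [CoxeterSystem.IsReduced, hc, List.length_take]; omega)
      have hlt : ℓ (π (ω.take k) * σ (ω[k])) < ℓ (π (ω.take k)) := by
        rcases cs.length_mul_simple (π (ω.take k)) (ω[k]) with h | h
        · exfalso
          rw [← hprod] at h
          rw [hlk] at h
          exact hne h
        · rw [hlk] at h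
          omega
      obtain ⟨m, hm, heq⟩ := exists_eraseIdx_of_length_lt cs (ω.take k) (ω[k]) hlt
      -- the new shorter word
      set ω₁ := (ω.take k).eraseIdx m ++ ω.drop (k+1) with hω₁
      have hπ : π ω₁ = π ω := by
        conv_rhs => rw [← List.take_append_drop (k+1) ω]
        rw [hω₁, cs.wordProd_append, cs.wordProd_append, ← heq, hprod]
      have hsub : ω₁.Sublist ω := by
        have h1 : ω₁.Sublist (ω.take k ++ ω.drop (k+1)) :=
          (List.eraseIdx_sublist _ m).append (List.Sublist.refl _)
        have h2 : ω.take k ++ ω.drop (k+1) = ω.eraseIdx k := (List.eraseIdx_eq_take_drop_succ ω k).symm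
        rw [h2] at h1
        exact h1.trans (List.eraseIdx_sublist ω k)
      have hlen₁ : ω₁.length ≤ n := by
        have h1 : ω₁.length ≤ (ω.eraseIdx k).length := by
          have h2 : ω.take k ++ ω.drop (k+1) = ω.eraseIdx k := (List.eraseIdx_eq_take_drop_succ ω k).symm
          have := ((List.eraseIdx_sublist (ω.take k) m).append (List.Sublist.refl (ω.drop (k+1)))).length_le
          rwa [h2] at this
        have h3 := List.length_eraseIdx_add_one hklt
        omega
      obtain ⟨ω', hsub', hred', hπ'⟩ := ih ω₁ hlen₁
      exact ⟨ω', hsub'.trans hsub, hred', by rw [hπ', hπ]⟩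

lemma exists_reduced_sublist (ω : List B) :
    ∃ ω', ω'.Sublist ω ∧ cs.IsReduced ω' ∧ π ω' = π ω :=
  exists_reduced_sublist_aux cs ω.length ω le_rfl


lemma L_one (L : W → Γ)
    (hweight : ∀ u v : W, ℓ (u * v) = ℓ u + ℓ v → L (u * v) = L u + L v) :
    L (1 : W) = 0 := by
  have h := hweight 1 1 (by simp)
  rw [one_mul] at h
  have h2 : L (1 : W) + 0 = L (1 : W) + L (1 : W) := by rw [add_zero]; exact h
  exact (add_left_cancel h2).symm

lemma L_wordProd_of_reduced (L : W → Γ)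
    (hweight : ∀ u v : W, ℓ (u * v) = ℓ u + ℓ v → L (u * v) = L u + L v) :
    ∀ ω : List B, cs.IsReduced ω → L (π ω) = (ω.map fun i => L (σ i)).sum := by
  intro ω
  induction ω with
  | nil =>
    intro _
    rw [cs.wordProd_nil, List.map_nil, List.sum_nil, L_one cs L hweight]
  | cons i ψ ih =>
    intro h
    have hlen : ℓ (π (i :: ψ)) = ψ.length + 1 := by
      rw [h, List.length_cons]
    have hψlen : ℓ (π ψ) = ψ.length := by
      have h2 : ℓ (π (i :: ψ)) ≤ 1 + ℓ (π ψ) := by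
        rw [cs.wordProd_cons]
        calc ℓ (σ i * π ψ) ≤ ℓ (σ i) + ℓ (π ψ) := cs.length_mul_le _ _
          _ = 1 + ℓ (π ψ) := by rw [cs.length_simple]
      have h3 := cs.length_wordProd_le ψ
      omega
    have hadd : ℓ (σ i * π ψ) = ℓ (σ i) + ℓ (π ψ) := by
      rw [← cs.wordProd_cons, cs.length_simple, hψlen, hlen]
      omega
    rw [cs.wordProd_cons, hweight _ _ hadd, ih hψlen, List.map_cons, List.sum_cons]

lemma sum_le_sum_of_sublist {l₁ l₂ : List B} (h : l₁.Sublist l₂) (L : W → Γ)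
    (hnonneg : ∀ i : B, 0 ≤ L (σ i)) :
    (l₁.map fun i => L (σ i)).sum ≤ (l₂.map fun i => L (σ i)).sum := by
  induction h with
  | slnil => exact le_refl _
  | cons a h ih =>
    rw [List.map_cons, List.sum_cons]
    exact ih.trans (le_add_of_nonneg_left (hnonneg a))
  | cons_cons a h ih =>
    rw [List.map_cons, List.sum_cons, List.map_cons, List.sum_cons]
    exact add_le_add_right ih _

lemma exists_word_of_mem_closure {I : Set B} {w : W}
    (hw : w ∈ Subgroup.closure (cs.simple '' I)) :
    ∃ ω : List B, (∀ i ∈ ω, i ∈ I) ∧ π ω = w := by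
  induction hw using Subgroup.closure_induction with
  | mem x hx =>
    obtain ⟨i, hi, rfl⟩ := hx
    exact ⟨[i], by simpa using hi, cs.wordProd_singleton i⟩
  | one => exact ⟨[], by simp, cs.wordProd_nil⟩
  | mul x y _ _ ihx ihy =>
    obtain ⟨ω₁, h₁, rfl⟩ := ihx
    obtain ⟨ω₂, h₂, rfl⟩ := ihy
    refine ⟨ω₁ ++ ω₂, ?_, cs.wordProd_append ω₁ ω₂⟩
    intro i hi
    rcases List.mem_append.mp hi with h | h
    · exact h₁ i h
    · exact h₂ i h
  | inv x _ ihx =>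
    obtain ⟨ω, h₁, rfl⟩ := ihx
    exact ⟨ω.reverse, fun i hi => h₁ i (List.mem_reverse.mp hi), cs.wordProd_reverse ω⟩

lemma wordProd_mem_closure {I : Set B} {ω : List B} (h : ∀ i ∈ ω, i ∈ I) :
    π ω ∈ Subgroup.closure (cs.simple '' I) := by
  induction ω with
  | nil =>
    rw [cs.wordProd_nil]
    exact one_mem _
  | cons i ψ ih =>
    rw [cs.wordProd_cons]
    exact mul_mem (Subgroup.subset_closure ⟨i, h i List.mem_cons_self, rfl⟩)
      (ih fun j hj => h j (List.mem_cons_of_mem _ hj))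


/-- For an irreducible affine Weyl group (encoded as: `S` finite, `W`
infinite, connected Coxeter graph, and `W` virtually abelian) and a non-negative weight
function `L`, the length-additive and the `L`-additive descriptions of the lowest
two-sided cell coincide:
`{ xwy : w ∈ 𝒲, ℓ(xwy)=ℓx+ℓw+ℓy, L w = ν } = { xwy : w ∈ 𝒲, L(xwy)=Lx+Lw+Ly, L w = ν }`. -/
theorem stmt4 [Finite B] [Infinite W]
    (hirr : (coxeterGraph M).Connected)
    (haffine : ∃ T : Subgroup W, (∀ a ∈ T, ∀ b ∈ T, a * b = b * a) ∧ T.FiniteIndex)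
    (L : W → Γ) (ν : Γ)
    (hweight : ∀ u v : W, cs.length (u * v) = cs.length u + cs.length v →
      L (u * v) = L u + L v)
    (hnonneg : ∀ i : B, 0 ≤ L (cs.simple i))
    (hν₁ : ∃ (I : Set B) (w₀ : W), I ≠ Set.univ ∧ IsLongest cs I w₀ ∧ L w₀ = ν)
    (hν₂ : ∀ (I : Set B) (w₀ : W), I ≠ Set.univ → IsLongest cs I w₀ → L w₀ ≤ ν) :
    {z : W | ∃ x w y : W, (∃ I : Set B, I ≠ Set.univ ∧ w ∈ par cs I) ∧ L w = ν ∧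
        z = x * w * y ∧
        cs.length (x * w * y) = cs.length x + cs.length w + cs.length y} =
    {z : W | ∃ x w y : W, (∃ I : Set B, I ≠ Set.univ ∧ w ∈ par cs I) ∧ L w = ν ∧
        z = x * w * y ∧ L (x * w * y) = L x + L w + L y} := by
  ext z
  simp only [Set.mem_setOf_eq]
  constructor
  · rintro ⟨x, w, y, hI, hLw, rfl, hlen⟩
    refine ⟨x, w, y, hI, hLw, rfl, ?_⟩
    have h1 : ℓ (x * w) ≤ ℓ x + ℓ w := cs.length_mul_le x w
    have h2 : ℓ (x * w * y) ≤ ℓ (x * w) + ℓ y := cs.length_mul_le _ y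
    have e1 : ℓ (x * w) = ℓ x + ℓ w := by omega
    have e2 : ℓ (x * w * y) = ℓ (x * w) + ℓ y := by omega
    rw [hweight _ _ e2, hweight _ _ e1]
  · rintro ⟨x, w, y, ⟨I, hIuniv, hwI⟩, hLw, rfl, hLadd⟩
    obtain ⟨a, hared, hxa⟩ := cs.exists_reduced_word' x
    obtain ⟨c, hcred, hyc⟩ := cs.exists_reduced_word' y
    have hwI' : w ∈ Subgroup.closure (cs.simple '' I) := hwI
    obtain ⟨b₀, hb₀I, hb₀⟩ := exists_word_of_mem_closure cs hwI'
    obtain ⟨b, hbsub, hbred, hbprod⟩ := exists_reduced_sublist cs b₀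
    have hbI : ∀ i ∈ b, i ∈ I := fun i hi => hb₀I i (hbsub.subset hi)
    have hbw : π b = w := by rw [hbprod, hb₀]
    have hl : π (a ++ b ++ c) = x * w * y := by
      rw [cs.wordProd_append, cs.wordProd_append, ← hxa, hbw, ← hyc]
    obtain ⟨d, hdsub, hdred, hdprod⟩ := exists_reduced_sublist cs (a ++ b ++ c)
    rw [List.sublist_append_iff] at hdsub
    obtain ⟨d₁₂, d₃, rfl, hd12, hd3⟩ := hdsub
    rw [List.sublist_append_iff] at hd12
    obtain ⟨d₁, d₂, rfl, hd1, hd2⟩ := hd12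
    have hsplit : π (d₁ ++ d₂ ++ d₃) = π d₁ * π d₂ * π d₃ := by
      rw [cs.wordProd_append, cs.wordProd_append]
    -- length bookkeeping
    have hL1 : ℓ (π d₁) ≤ d₁.length := cs.length_wordProd_le d₁
    have hL2 : ℓ (π d₂) ≤ d₂.length := cs.length_wordProd_le d₂
    have hL3 : ℓ (π d₃) ≤ d₃.length := cs.length_wordProd_le d₃
    have hdlen : ℓ (π (d₁ ++ d₂ ++ d₃)) = d₁.length + d₂.length + d₃.length := by
      rw [hdred, List.length_append, List.length_append]
    have hm1 : ℓ (π d₁ * π d₂) ≤ ℓ (π d₁) + ℓ (π d₂) := cs.length_mul_le _ _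
    have hm2 : ℓ (π d₁ * π d₂ * π d₃) ≤ ℓ (π d₁ * π d₂) + ℓ (π d₃) := cs.length_mul_le _ _
    have hdl : ℓ (π (d₁ ++ d₂ ++ d₃)) = ℓ (π d₁ * π d₂ * π d₃) := by rw [hsplit]
    have e1 : ℓ (π d₁) = d₁.length := by omega
    have e2 : ℓ (π d₂) = d₂.length := by omega
    have e3 : ℓ (π d₃) = d₃.length := by omega
    have eadd : ℓ (π d₁ * π d₂ * π d₃) = ℓ (π d₁) + ℓ (π d₂) + ℓ (π d₃) := by omega
    have hd1red : cs.IsReduced d₁ := e1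
    have hd2red : cs.IsReduced d₂ := e2
    have hd3red : cs.IsReduced d₃ := e3
    -- L bookkeeping
    have hLz : L (x * w * y) =
        ((d₁.map fun i => L (σ i)).sum + (d₂.map fun i => L (σ i)).sum)
          + (d₃.map fun i => L (σ i)).sum := by
      rw [← hl, ← hdprod, L_wordProd_of_reduced cs L hweight _ hdred,
        List.map_append, List.map_append, List.sum_append, List.sum_append]
    have hLx : L x = (a.map fun i => L (σ i)).sum := by
      rw [hxa]; exact L_wordProd_of_reduced cs L hweight a hared
    have hLy : L y = (c.map fun i => L (σ i)).sum := by
      rw [hyc]; exact L_wordProd_of_reduced cs L hweight c hcred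
    have hLw2 : L w = (b.map fun i => L (σ i)).sum := by
      rw [← hbw]; exact L_wordProd_of_reduced cs L hweight b hbred
    have hs1 : (d₁.map fun i => L (σ i)).sum ≤ (a.map fun i => L (σ i)).sum :=
      sum_le_sum_of_sublist cs hd1 L hnonneg
    have hs2 : (d₂.map fun i => L (σ i)).sum ≤ (b.map fun i => L (σ i)).sum :=
      sum_le_sum_of_sublist cs hd2 L hnonneg
    have hs3 : (d₃.map fun i => L (σ i)).sum ≤ (c.map fun i => L (σ i)).sum :=
      sum_le_sum_of_sublist cs hd3 L hnonneg
    have htot : ((d₁.map fun i => L (σ i)).sum + (d₂.map fun i => L (σ i)).sum)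
          + (d₃.map fun i => L (σ i)).sum
        = ((a.map fun i => L (σ i)).sum + (b.map fun i => L (σ i)).sum)
          + (c.map fun i => L (σ i)).sum := by
      rw [← hLz, hLadd, hLx, hLw2, hLy]
    have heq2 : (d₂.map fun i => L (σ i)).sum = (b.map fun i => L (σ i)).sum := by
      refine le_antisymm hs2 ?_
      by_contra hcon
      push_neg at hcon
      have : ((a.map fun i => L (σ i)).sum + (b.map fun i => L (σ i)).sum)
          + (c.map fun i => L (σ i)).sum
          > ((d₁.map fun i => L (σ i)).sum + (d₂.map fun i => L (σ i)).sum)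
          + (d₃.map fun i => L (σ i)).sum := by
        have := add_lt_add_of_le_of_lt hs1 hcon
        exact add_lt_add_of_lt_of_le this hs3
      exact ne_of_lt this htot
    have hLw' : L (π d₂) = ν := by
      rw [L_wordProd_of_reduced cs L hweight d₂ hd2red, heq2, ← hLw2, hLw]
    refine ⟨π d₁, π d₂, π d₃, ⟨I, hIuniv, ?_⟩, hLw', ?_, ?_⟩
    · exact (wordProd_mem_closure cs (fun i hi => hbI i (hd2.subset hi)) : π d₂ ∈ par cs I)
    · rw [← hl, ← hdprod, hsplit]
    · exact eadd


end Stmt4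
end

section
/- If L : W → Γ is a positive weight function (L(s) > 0 for all s ∈ S), then a finite sequence (w_1,…,w_n) of elements of W is L-additive (L(w_1⋯w_n) = L(w_1)+⋯+L(w_n)) if and only if it is length-additive (ℓ(w_1⋯w_n) = ℓ(w_1)+⋯+ℓ(w_n)); that is, ℒ_L(W) = ℒ(W). -/
section Aux

variable {B W Γ : Type*} [Group W] [AddCommGroup Γ] [LinearOrder Γ] [IsOrderedAddMonoid Γ]
    {M : CoxeterMatrix B} (cs : CoxeterSystem M W) (L : W → Γ)

private lemma stmt6_L_one
    (hweight : ∀ u v : W, cs.length (u * v) = cs.length u + cs.length v →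
      L (u * v) = L u + L v) : L (1 : W) = 0 := by
  have := hweight 1 1 (by simp)
  simp only [mul_one] at this
  exact (left_eq_add.mp this)

/-- Key word lemma: for a reduced word the weight of the product equals the sum of the
weights of the letters; for a non-reduced word it is strictly smaller. -/
private lemma stmt6_word
    (hweight : ∀ u v : W, cs.length (u * v) = cs.length u + cs.length v →
      L (u * v) = L u + L v)
    (hpos : ∀ i : B, 0 < L (cs.simple i)) :
    ∀ ω : List B,
      (cs.length (cs.wordProd ω) = ω.length →
        L (cs.wordProd ω) = (ω.map (fun i => L (cs.simple i))).sum) ∧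
      (cs.length (cs.wordProd ω) < ω.length →
        L (cs.wordProd ω) < (ω.map (fun i => L (cs.simple i))).sum) := by
  intro ω
  induction ω with
  | nil =>
      constructor
      · intro _; simpa using stmt6_L_one cs L hweight
      · intro h; simp at h
  | cons i rest ih =>
      have hlen_rest : cs.length (cs.wordProd rest) ≤ rest.length :=
        cs.length_wordProd_le rest
      have hLrest : L (cs.wordProd rest) ≤ (rest.map (fun i => L (cs.simple i))).sum := by
        rcases lt_or_eq_of_le hlen_rest with h | h
        · exact le_of_lt (ih.2 h)
        · exact le_of_eq (ih.1 h)
      rw [cs.wordProd_cons]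
      set u := cs.wordProd rest with hu
      rcases cs.length_simple_mul u i with hasc | hdesc
      · -- ascent: ℓ(s i * u) = ℓ u + 1
        have hadd : cs.length (cs.simple i * u) = cs.length (cs.simple i) + cs.length u := by
          rw [cs.length_simple, hasc]; ring
        have hL : L (cs.simple i * u) = L (cs.simple i) + L u := hweight _ _ hadd
        constructor
        · intro h
          simp only [List.length_cons] at h
          have hred : cs.length u = rest.length := by omega
          rw [hL, ih.1 hred, List.map_cons, List.sum_cons]
        · intro h
          simp only [List.length_cons] at h
          have hlt : cs.length u < rest.length := by omega
          rw [hL, List.map_cons, List.sum_cons]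
          exact add_lt_add_right (ih.2 hlt) _
      · -- descent: ℓ(s i * u) + 1 = ℓ u
        set v := cs.simple i * u with hv
        have huv : u = cs.simple i * v := by
          rw [hv, ← mul_assoc, cs.simple_mul_simple_self, one_mul]
        have hadd : cs.length (cs.simple i * v) = cs.length (cs.simple i) + cs.length v := by
          rw [cs.length_simple, ← huv]; omega
        have hLu : L u = L (cs.simple i) + L v := by
          rw [huv]; exact hweight _ _ hadd
        have hlv : cs.length v < rest.length := by omega
        have hstrict : L v < (List.map (fun i => L (cs.simple i)) (i :: rest)).sum := by
          have h1 : L v < L u := by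
            rw [hLu]; exact lt_add_of_pos_left _ (hpos i)
          rw [List.map_cons, List.sum_cons]
          calc L v < L u := h1
            _ ≤ (rest.map (fun i => L (cs.simple i))).sum := hLrest
            _ < L (cs.simple i) + (rest.map (fun i => L (cs.simple i))).sum :=
                lt_add_of_pos_left _ (hpos i)
        constructor
        · intro h
          simp only [List.length_cons] at h
          omega
        · intro _; exact hstrict

/-- Subadditivity of `L`, with strictness when the lengths do not add. -/
private lemma stmt6_pair
    (hweight : ∀ u v : W, cs.length (u * v) = cs.length u + cs.length v →
      L (u * v) = L u + L v)
    (hpos : ∀ i : B, 0 < L (cs.simple i)) (u v : W)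
    (h : cs.length (u * v) < cs.length u + cs.length v) :
    L (u * v) < L u + L v := by
  obtain ⟨a, ha, hpa⟩ := cs.exists_reduced_word u
  obtain ⟨b, hb, hpb⟩ := cs.exists_reduced_word v
  have ha' : cs.length u = a.length := by rw [hpa]; exact ha
  have hb' : cs.length v = b.length := by rw [hpb]; exact hb
  have hprod : cs.wordProd (a ++ b) = u * v := by
    rw [cs.wordProd_append, ← hpa, ← hpb]
  have hlt : cs.length (cs.wordProd (a ++ b)) < (a ++ b).length := by
    rw [hprod, List.length_append, ← ha', ← hb']; exact h
  have hkey := (stmt6_word cs L hweight hpos (a ++ b)).2 hlt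
  rw [hprod] at hkey
  have hLu : L u = (a.map (fun i => L (cs.simple i))).sum := by
    rw [hpa]; exact (stmt6_word cs L hweight hpos a).1 (by rw [← hpa, ha'])
  have hLv : L v = (b.map (fun i => L (cs.simple i))).sum := by
    rw [hpb]; exact (stmt6_word cs L hweight hpos b).1 (by rw [← hpb, hb'])
  rw [List.map_append, List.sum_append] at hkey
  rw [hLu, hLv]
  exact hkey

private lemma stmt6_pair_le
    (hweight : ∀ u v : W, cs.length (u * v) = cs.length u + cs.length v →
      L (u * v) = L u + L v)
    (hpos : ∀ i : B, 0 < L (cs.simple i)) (u v : W) :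
    L (u * v) ≤ L u + L v := by
  rcases lt_or_eq_of_le (cs.length_mul_le u v) with h | h
  · exact le_of_lt (stmt6_pair cs L hweight hpos u v h)
  · exact le_of_eq (hweight u v h)

private lemma stmt6_len_le (l : List W) :
    cs.length l.prod ≤ (l.map cs.length).sum := by
  induction l with
  | nil => simp
  | cons w t ih =>
      rw [List.prod_cons, List.map_cons, List.sum_cons]
      calc cs.length (w * t.prod) ≤ cs.length w + cs.length t.prod := cs.length_mul_le _ _
        _ ≤ cs.length w + (t.map cs.length).sum := by omega

private lemma stmt6_list
    (hweight : ∀ u v : W, cs.length (u * v) = cs.length u + cs.length v →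
      L (u * v) = L u + L v)
    (hpos : ∀ i : B, 0 < L (cs.simple i)) :
    ∀ l : List W,
      L l.prod ≤ (l.map L).sum ∧
      (cs.length l.prod < (l.map cs.length).sum → L l.prod < (l.map L).sum) := by
  intro l
  induction l with
  | nil =>
      refine ⟨le_of_eq ?_, by simp⟩
      simpa using stmt6_L_one cs L hweight
  | cons w t ih =>
      rw [List.prod_cons, List.map_cons, List.sum_cons, List.map_cons, List.sum_cons]
      have h1 : L (w * t.prod) ≤ L w + L t.prod := stmt6_pair_le cs L hweight hpos _ _
      constructor
      · calc L (w * t.prod) ≤ L w + L t.prod := h1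
          _ ≤ L w + (t.map L).sum := add_le_add_right ih.1 _
      · intro h
        rcases lt_or_eq_of_le (cs.length_mul_le w t.prod) with hc | hc
        · exact (stmt6_pair cs L hweight hpos w t.prod hc).trans_le
            (add_le_add_right ih.1 _)
        · have hlt : cs.length t.prod < (t.map cs.length).sum := by omega
          exact h1.trans_lt (add_lt_add_right (ih.2 hlt) _)

end Aux

/-- If `L` is a positive weight function on a Coxeter system `(W,S)`, then a
finite sequence `(w₁,…,wₙ)` of elements of `W` is `L`-additive iff it is length-additive;
that is, `ℒ_L(W) = ℒ(W)`. -/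
theorem stmt6 {B W Γ : Type*} [Group W] [AddCommGroup Γ] [LinearOrder Γ] [IsOrderedAddMonoid Γ]
    {M : CoxeterMatrix B} (cs : CoxeterSystem M W) (L : W → Γ)
    (hweight : ∀ u v : W, cs.length (u * v) = cs.length u + cs.length v →
      L (u * v) = L u + L v)
    (hpos : ∀ i : B, 0 < L (cs.simple i))
    (l : List W) :
    L l.prod = (l.map L).sum ↔ (cs.length l.prod : ℕ) = (l.map cs.length).sum := by
  constructor
  · intro hL
    by_contra hne
    have hlt : cs.length l.prod < (l.map cs.length).sum :=
      lt_of_le_of_ne (stmt6_len_le cs l) hne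
    exact absurd hL (ne_of_lt ((stmt6_list cs L hweight hpos l).2 hlt))
  · intro hlen
    induction l with
    | nil => simpa using stmt6_L_one cs L hweight
    | cons w t ih =>
        simp only [List.prod_cons, List.map_cons, List.sum_cons] at hlen ⊢
        have h1 : cs.length t.prod ≤ (t.map cs.length).sum := stmt6_len_le cs t
        have h2 : cs.length (w * t.prod) ≤ cs.length w + cs.length t.prod :=
          cs.length_mul_le w t.prod
        have heq1 : cs.length t.prod = (t.map cs.length).sum := by omega
        have heq2 : cs.length (w * t.prod) = cs.length w + cs.length t.prod := by omega
        rw [hweight w t.prod heq2, ih heq1]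
end

section
/- Let (W,S) be a Coxeter system, L a non-negative weight function, S° = {s : L(s)=0}, S⁺ = {s : L(s)>0}, W° = ⟨S°⟩, and S̃ = { w s w⁻¹ : w ∈ W°, s ∈ S⁺ }, W̃ = ⟨S̃⟩. Then W is the semidirect product W° ⋉ W̃ (W̃ is normal in W, W° ∩ W̃ = 1, and W = W° W̃), and (W̃, S̃) is a Coxeter system. -/
namespace Stmt8

variable {B W Γ : Type*} [Group W] [AddCommGroup Γ] [LinearOrder Γ] [IsOrderedAddMonoid Γ]
variable {M : CoxeterMatrix B} (cs : CoxeterSystem M W) (L : W → Γ)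

/-- `W° = ⟨S°⟩`, the parabolic subgroup generated by the simple reflections of weight `0`. -/
def Wo : Subgroup W := Subgroup.closure (cs.simple '' {i | L (cs.simple i) = 0})

/-- `S̃ = { w s w⁻¹ : w ∈ W°, s ∈ S⁺ }`. -/
def Stilde : Set W :=
  {x | ∃ w ∈ Wo cs L, ∃ i : B, 0 < L (cs.simple i) ∧ x = w * cs.simple i * w⁻¹}

/-- `W̃ = ⟨S̃⟩`. -/
def Wtilde : Subgroup W := Subgroup.closure (Stilde cs L)

/-! ### Auxiliary lemmas -/

lemma orderOf_conj_eq (g a : W) : orderOf (g * a * g⁻¹) = orderOf a := by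
  simpa using orderOf_injective (MulAut.conj g).toMonoidHom (MulAut.conj g).injective a

section Weight

variable (hweight : ∀ u v : W, cs.length (u * v) = cs.length u + cs.length v →
      L (u * v) = L u + L v)

lemma L_one (hweight : ∀ u v : W, cs.length (u * v) = cs.length u + cs.length v →
      L (u * v) = L u + L v) : L 1 = 0 := by
  have h := hweight 1 1 (by simp)
  rw [mul_one] at h
  exact (left_eq_add.mp h)

lemma L_simple_mul (hweight : ∀ u v : W, cs.length (u * v) = cs.length u + cs.length v →
      L (u * v) = L u + L v) (w : W) (i : B) :
    L (cs.simple i * w) = L w + L (cs.simple i) ∨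
      L (cs.simple i * w) = L w - L (cs.simple i) := by
  rcases cs.length_simple_mul w i with h | h
  · left
    have h' := hweight (cs.simple i) w (by rw [cs.length_simple]; omega)
    rw [h', add_comm]
  · right
    have h2 : cs.length (cs.simple i * (cs.simple i * w)) =
        cs.length (cs.simple i) + cs.length (cs.simple i * w) := by
      rw [cs.simple_mul_simple_cancel_left, cs.length_simple]; omega
    have h' := hweight (cs.simple i) (cs.simple i * w) h2
    rw [cs.simple_mul_simple_cancel_left] at h'
    rw [h']
    abel

lemma L_walk (hweight : ∀ u v : W, cs.length (u * v) = cs.length u + cs.length v →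
      L (u * v) = L u + L v) {i j : B} (hi : L (cs.simple i) = 0) (r : ℕ) :
    ∃ a : ℤ, L (cs.wordProd (CoxeterSystem.alternatingWord i j (2 * r))) = a • L (cs.simple j)
      ∧ (Even a ↔ Even r) := by
  induction r with
  | zero =>
      refine ⟨0, ?_, by simp⟩
      simpa [CoxeterSystem.alternatingWord, CoxeterSystem.wordProd] using L_one cs L hweight
  | succ r ih =>
      obtain ⟨a, ha, hpar⟩ := ih
      have e1 : CoxeterSystem.alternatingWord i j (2 * (r + 1)) =
          i :: j :: CoxeterSystem.alternatingWord i j (2 * r) := by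
        have h1 := CoxeterSystem.alternatingWord_succ' i j (2 * r + 1)
        have h2 := CoxeterSystem.alternatingWord_succ' i j (2 * r)
        have : 2 * (r + 1) = (2 * r + 1) + 1 := by ring
        rw [this, h1, h2]
        simp [Nat.even_add_one, parity_simps]
      rw [e1, cs.wordProd_cons, cs.wordProd_cons]
      set x := cs.wordProd (CoxeterSystem.alternatingWord i j (2 * r)) with hx
      have hstepi : L (cs.simple i * (cs.simple j * x)) = L (cs.simple j * x) := by
        rcases L_simple_mul cs L hweight (cs.simple j * x) i with h | h <;>
          rw [h, hi] <;> abel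
      rcases L_simple_mul cs L hweight x j with h | h
      · refine ⟨a + 1, ?_, ?_⟩
        · rw [hstepi, h, ha, add_zsmul, one_zsmul]
        · rw [Int.even_add_one, hpar, Nat.even_add_one]
      · refine ⟨a - 1, ?_, ?_⟩
        · rw [hstepi, h, ha, sub_zsmul, one_zsmul]; abel
        · rw [Int.even_sub_one, hpar, Nat.even_add_one]

/-- If `L (s i) = 0` and `L (s j) > 0`, then `M i j` is even.  (In particular `i` and `j`
cannot be conjugate by a dihedral relation.) -/
lemma even_M_of_mixed (hweight : ∀ u v : W, cs.length (u * v) = cs.length u + cs.length v →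
      L (u * v) = L u + L v) {i j : B} (hi : L (cs.simple i) = 0)
    (hj : 0 < L (cs.simple j)) : Even (M i j) := by
  obtain ⟨a, ha, hpar⟩ := L_walk cs L hweight hi (r := M i j) (j := j)
  have hprod : cs.wordProd (CoxeterSystem.alternatingWord i j (2 * M i j)) = 1 := by
    rw [cs.prod_alternatingWord_eq_mul_pow]
    have h2 : (2 * M i j) / 2 = M i j := by omega
    rw [if_pos (by exact even_two_mul _), h2, cs.simple_mul_simple_pow, one_mul]
  rw [hprod, L_one cs L hweight] at ha
  have ha0 : a = 0 := by
    rcases lt_trichotomy a 0 with h | h | h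
    · exfalso
      have hpos : 0 < (-a) • L (cs.simple j) := zsmul_pos hj (by omega)
      rw [neg_zsmul, ← ha, neg_zero] at hpos
      exact lt_irrefl _ hpos
    · exact h
    · exfalso
      have hpos : 0 < a • L (cs.simple j) := zsmul_pos hj h
      rw [← ha] at hpos
      exact lt_irrefl _ hpos
  exact hpar.mp (by simp [ha0])

end Weight

/-! ### Basic properties of `S̃` -/

lemma stilde_mul_self (t : Stilde cs L) : (t : W) * (t : W) = 1 := by
  obtain ⟨w, _, k, _, ht⟩ := t.2
  rw [ht]
  simp [mul_assoc, cs.simple_mul_simple_cancel_left]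

lemma stilde_inv (t : Stilde cs L) : (t : W)⁻¹ = (t : W) :=
  inv_eq_of_mul_eq_one_right (stilde_mul_self cs L t)

lemma simple_mem_Wo {i : B} (h : L (cs.simple i) = 0) : cs.simple i ∈ Wo cs L :=
  Subgroup.subset_closure ⟨i, h, rfl⟩

lemma simple_mem_stilde {i : B} (h : 0 < L (cs.simple i)) : cs.simple i ∈ Stilde cs L :=
  ⟨1, one_mem _, i, h, by group⟩

/-! ### The Coxeter matrix on `S̃` -/

/-- The Coxeter matrix on `S̃`, whose entries are the orders of products of pairs. -/
noncomputable def Mt : CoxeterMatrix (Stilde cs L) where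
  M := Matrix.of fun t t' => orderOf ((t : W) * (t' : W))
  isSymm := by
    ext t t'
    show orderOf ((t' : W) * (t : W)) = orderOf ((t : W) * (t' : W))
    have h : (t' : W) * ((t : W) * (t' : W)) * (t' : W)⁻¹ = (t' : W) * (t : W) := by
      rw [stilde_inv]
      simp [mul_assoc, stilde_mul_self]
    rw [← h, orderOf_conj_eq]
  diagonal := fun t => by
    show orderOf ((t : W) * (t : W)) = 1
    rw [stilde_mul_self, orderOf_one]
  off_diagonal := fun t t' hne => by
    intro h1
    have h2 : (t : W) * (t' : W) = 1 := orderOf_eq_one_iff.mp h1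
    have h3 : (t : W) = (t' : W) := by
      rw [← stilde_inv cs L t']
      exact eq_inv_of_mul_eq_one_left h2
    exact hne (Subtype.ext h3)

lemma Mt_apply (t t' : Stilde cs L) : (Mt cs L) t t' = orderOf ((t : W) * (t' : W)) := rfl

/-- Conjugation by an element of `W°` permutes `S̃`. -/
def stildeConj (w : W) (hw : w ∈ Wo cs L) (t : Stilde cs L) : Stilde cs L :=
  ⟨w * (t : W) * w⁻¹, by
    obtain ⟨v, hv, k, hk, ht⟩ := t.2
    exact ⟨w * v, mul_mem hw hv, k, hk, by rw [ht]; group⟩⟩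

lemma stildeConj_coe (w : W) (hw : w ∈ Wo cs L) (t : Stilde cs L) :
    (stildeConj cs L w hw t : W) = w * (t : W) * w⁻¹ := rfl

lemma Mt_conj (w : W) (hw : w ∈ Wo cs L) (t t' : Stilde cs L) :
    (Mt cs L) (stildeConj cs L w hw t) (stildeConj cs L w hw t') = (Mt cs L) t t' := by
  rw [Mt_apply, Mt_apply, stildeConj_coe, stildeConj_coe]
  have h : (w * (t : W) * w⁻¹) * (w * (t' : W) * w⁻¹) = w * ((t : W) * (t' : W)) * w⁻¹ := by
    group
  rw [h, orderOf_conj_eq]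

/-! ### The conjugation action of `W°` on the abstract Coxeter group of `S̃` -/

/-- The abstract Coxeter group on `S̃`. -/
noncomputable abbrev Nt := (Mt cs L).Group

noncomputable abbrev csT : CoxeterSystem (Mt cs L) (Nt cs L) := (Mt cs L).toCoxeterSystem

lemma csT_liftable (f : Stilde cs L → Stilde cs L)
    (hf : ∀ t t', (Mt cs L) (f t) (f t') = (Mt cs L) t t') :
    CoxeterMatrix.IsLiftable (Mt cs L) (fun t => (csT cs L).simple (f t)) := by
  intro t t'
  have h := (csT cs L).simple_mul_simple_pow (f t) (f t')
  rwa [hf] at h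

/-- The homomorphism `Nt → Nt` induced by conjugation by `w ∈ W°`. -/
noncomputable def conjHomAux (w : W) (hw : w ∈ Wo cs L) : Nt cs L →* Nt cs L :=
  (csT cs L).lift ⟨fun t => (csT cs L).simple (stildeConj cs L w hw t),
    csT_liftable cs L _ (Mt_conj cs L w hw)⟩

lemma conjHomAux_simple (w : W) (hw : w ∈ Wo cs L) (t : Stilde cs L) :
    conjHomAux cs L w hw ((csT cs L).simple t) = (csT cs L).simple (stildeConj cs L w hw t) :=
  (csT cs L).lift_apply_simple _ t

lemma conjHomAux_comp (w v : W) (hw : w ∈ Wo cs L) (hv : v ∈ Wo cs L) :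
    (conjHomAux cs L w hw).comp (conjHomAux cs L v hv) =
      conjHomAux cs L (w * v) (mul_mem hw hv) := by
  apply (csT cs L).ext_simple
  intro t
  simp only [MonoidHom.comp_apply, conjHomAux_simple]
  congr 1
  apply Subtype.ext
  simp only [stildeConj_coe]
  group

lemma conjHomAux_inv_comp (w : W) (hw : w ∈ Wo cs L) :
    (conjHomAux cs L w⁻¹ (inv_mem hw)).comp (conjHomAux cs L w hw) = MonoidHom.id _ := by
  apply (csT cs L).ext_simple
  intro t
  simp only [MonoidHom.comp_apply, conjHomAux_simple, MonoidHom.id_apply]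
  congr 1
  apply Subtype.ext
  simp only [stildeConj_coe]
  group

lemma conjHomAux_comp_inv (w : W) (hw : w ∈ Wo cs L) :
    (conjHomAux cs L w hw).comp (conjHomAux cs L w⁻¹ (inv_mem hw)) = MonoidHom.id _ := by
  apply (csT cs L).ext_simple
  intro t
  simp only [MonoidHom.comp_apply, conjHomAux_simple, MonoidHom.id_apply]
  congr 1
  apply Subtype.ext
  simp only [stildeConj_coe]
  group

/-- The conjugation action `φ : W° →* MulAut Nt`. -/
noncomputable def phi : (Wo cs L) →* MulAut (Nt cs L) where
  toFun w := MonoidHom.toMulEquiv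
    (conjHomAux cs L (w : W) w.2)
    (conjHomAux cs L ((w : W))⁻¹ (inv_mem w.2))
    (conjHomAux_inv_comp cs L (w : W) w.2)
    (conjHomAux_comp_inv cs L (w : W) w.2)
  map_one' := by
    apply MulEquiv.ext
    intro x
    show conjHomAux cs L ((1 : Wo cs L) : W) _ x = x
    have h : conjHomAux cs L ((1 : Wo cs L) : W) (Subgroup.one_mem _) = MonoidHom.id _ := by
      apply (csT cs L).ext_simple
      intro t
      rw [conjHomAux_simple, MonoidHom.id_apply]
      congr 1
      apply Subtype.ext
      simp [stildeConj_coe]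
    exact DFunLike.congr_fun h x
  map_mul' w v := by
    apply MulEquiv.ext
    intro x
    show conjHomAux cs L ((w * v : Wo cs L) : W) _ x =
      conjHomAux cs L (w : W) w.2 (conjHomAux cs L (v : W) v.2 x)
    have h := conjHomAux_comp cs L (w : W) (v : W) w.2 v.2
    have h2 : conjHomAux cs L ((w * v : Wo cs L) : W) (w * v).2 =
        conjHomAux cs L ((w : W) * (v : W)) (mul_mem w.2 v.2) := rfl
    rw [h2, ← h]
    rfl

lemma phi_apply_simple (w : Wo cs L) (t : Stilde cs L) :
    phi cs L w ((csT cs L).simple t) = (csT cs L).simple (stildeConj cs L (w : W) w.2 t) :=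
  conjHomAux_simple cs L (w : W) w.2 t

/-! ### The semidirect product and the two homomorphisms -/

/-- The semidirect product `Nt ⋊ W°`. -/
noncomputable abbrev Gp := (Nt cs L) ⋊[phi cs L] (Wo cs L)

/-- The homomorphism `Nt →* W` sending each abstract generator to itself. -/
noncomputable def f1 : Nt cs L →* W :=
  (csT cs L).lift ⟨fun t => (t : W), fun t t' => pow_orderOf_eq_one _⟩

lemma f1_simple (t : Stilde cs L) : f1 cs L ((csT cs L).simple t) = (t : W) :=
  (csT cs L).lift_apply_simple _ t

/-- The homomorphism `Ξ : Nt ⋊ W° →* W`. -/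
noncomputable def Xi : Gp cs L →* W :=
  SemidirectProduct.lift (f1 cs L) (Wo cs L).subtype (by
    intro g
    apply (csT cs L).ext_simple
    intro t
    simp only [MonoidHom.comp_apply, MulEquiv.coe_toMonoidHom, MulAut.conj_apply]
    rw [phi_apply_simple, f1_simple, f1_simple, stildeConj_coe]
    rfl)

lemma Xi_inl (n : Nt cs L) : Xi cs L (SemidirectProduct.inl n) = f1 cs L n :=
  SemidirectProduct.lift_inl _ _ _ n

lemma Xi_inr (w : Wo cs L) : Xi cs L (SemidirectProduct.inr w) = (w : W) :=
  SemidirectProduct.lift_inr _ _ _ w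

section Theta

variable (hweight : ∀ u v : W, cs.length (u * v) = cs.length u + cs.length v →
      L (u * v) = L u + L v)
variable (hnonneg : ∀ i : B, 0 ≤ L (cs.simple i))

/-- The generator images for `Θ : W →* Nt ⋊ W°`. -/
noncomputable def thetaGen (hnonneg : ∀ i : B, 0 ≤ L (cs.simple i)) (i : B) : Gp cs L :=
  if h : 0 < L (cs.simple i) then
    SemidirectProduct.inl ((csT cs L).simple ⟨cs.simple i, simple_mem_stilde cs L h⟩)
  else
    SemidirectProduct.inr ⟨cs.simple i, simple_mem_Wo cs L (le_antisymm (not_lt.mp h) (hnonneg i))⟩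

lemma sq_inr_inl (a : Wo cs L) (ha : a * a = 1) (x : Nt cs L) :
    (SemidirectProduct.inr (φ := phi cs L) a * SemidirectProduct.inl x) ^ 2 =
      SemidirectProduct.inl (phi cs L a x * x) := by
  have key : phi cs L a (phi cs L a x) = x := by
    have h2 : phi cs L a * phi cs L a = 1 := by rw [← map_mul, ha, map_one]
    calc phi cs L a (phi cs L a x) = (phi cs L a * phi cs L a) x := rfl
      _ = x := by rw [h2]; rfl
  rw [pow_two]
  ext
  · simp only [SemidirectProduct.mul_left, SemidirectProduct.mul_right,
      SemidirectProduct.left_inl, SemidirectProduct.left_inr, SemidirectProduct.right_inl,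
      SemidirectProduct.right_inr, one_mul, mul_one, key]
  · simp only [SemidirectProduct.mul_right, SemidirectProduct.right_inl,
      SemidirectProduct.right_inr, one_mul, mul_one, ha]

lemma sq_inl_inr (a : Wo cs L) (ha : a * a = 1) (x : Nt cs L) :
    (SemidirectProduct.inl (φ := phi cs L) x * SemidirectProduct.inr a) ^ 2 =
      SemidirectProduct.inl (x * phi cs L a x) := by
  rw [pow_two]
  ext
  · simp only [SemidirectProduct.mul_left, SemidirectProduct.mul_right,
      SemidirectProduct.left_inl, SemidirectProduct.left_inr, SemidirectProduct.right_inl,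
      SemidirectProduct.right_inr, one_mul, mul_one, map_one, MulAut.one_apply]
  · simp only [SemidirectProduct.mul_right, SemidirectProduct.right_inl,
      SemidirectProduct.right_inr, one_mul, mul_one, ha]

lemma thetaGen_liftable (hweight : ∀ u v : W, cs.length (u * v) = cs.length u + cs.length v →
      L (u * v) = L u + L v) (hnonneg : ∀ i : B, 0 ≤ L (cs.simple i)) :
    CoxeterMatrix.IsLiftable M (thetaGen cs L hnonneg) := by
  intro i i'
  by_cases hM0 : M i i' = 0
  · rw [hM0, pow_zero]
  by_cases hi : 0 < L (cs.simple i) <;> by_cases hi' : 0 < L (cs.simple i')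
  · -- both positive
    rw [thetaGen, thetaGen, dif_pos hi, dif_pos hi', ← map_mul, ← map_pow]
    set t : Stilde cs L := ⟨cs.simple i, simple_mem_stilde cs L hi⟩
    set t' : Stilde cs L := ⟨cs.simple i', simple_mem_stilde cs L hi'⟩
    have hrel := (csT cs L).simple_mul_simple_pow t t'
    have hdvd : (Mt cs L) t t' ∣ M i i' := by
      rw [Mt_apply]
      exact orderOf_dvd_of_pow_eq_one (cs.simple_mul_simple_pow i i')
    obtain ⟨c, hc⟩ := hdvd
    rw [hc, pow_mul, hrel, one_pow, map_one]
  · -- i positive, i' zero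
    have hLi' : L (cs.simple i') = 0 := le_antisymm (not_lt.mp hi') (hnonneg i')
    have heven : Even (M i i') := by
      have h := even_M_of_mixed cs L hweight hLi' hi
      rwa [M.symmetric] at h
    obtain ⟨k, hk⟩ := heven
    have hk2 : M i i' = 2 * k := by omega
    have hkne : k ≠ 0 := by omega
    rw [thetaGen, thetaGen, dif_pos hi, dif_neg hi']
    set a : Wo cs L := ⟨cs.simple i', simple_mem_Wo cs L hLi'⟩
    set t : Stilde cs L := ⟨cs.simple i, simple_mem_stilde cs L hi⟩
    have ha : a * a = 1 := Subtype.ext (by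
      show cs.simple i' * cs.simple i' = 1
      exact cs.simple_mul_simple_self i')
    rw [hk2, pow_mul, sq_inl_inr cs L a ha, ← map_pow]
    have hphi : phi cs L a ((csT cs L).simple t) =
        (csT cs L).simple (stildeConj cs L (a : W) a.2 t) := phi_apply_simple cs L a t
    rw [hphi]
    have hrel := (csT cs L).simple_mul_simple_pow t (stildeConj cs L (a : W) a.2 t)
    have hval : ((t : W) * ((stildeConj cs L (a : W) a.2 t) : W)) = (cs.simple i * cs.simple i') ^ 2 := by
      rw [stildeConj_coe]
      show cs.simple i * (cs.simple i' * cs.simple i * (cs.simple i')⁻¹) = _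
      rw [cs.inv_simple, pow_two]
      simp [mul_assoc]
    have hdvd : (Mt cs L) t (stildeConj cs L (a : W) a.2 t) ∣ k := by
      rw [Mt_apply, hval]
      apply orderOf_dvd_of_pow_eq_one
      rw [← pow_mul, ← hk2]
      exact cs.simple_mul_simple_pow i i'
    obtain ⟨c, hc⟩ := hdvd
    rw [hc, pow_mul, hrel, one_pow, map_one]
  · -- i zero, i' positive
    have hLi : L (cs.simple i) = 0 := le_antisymm (not_lt.mp hi) (hnonneg i)
    have heven : Even (M i i') := even_M_of_mixed cs L hweight hLi hi'
    obtain ⟨k, hk⟩ := heven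
    have hk2 : M i i' = 2 * k := by omega
    have hkne : k ≠ 0 := by omega
    rw [thetaGen, thetaGen, dif_neg hi, dif_pos hi']
    set a : Wo cs L := ⟨cs.simple i, simple_mem_Wo cs L hLi⟩
    set t : Stilde cs L := ⟨cs.simple i', simple_mem_stilde cs L hi'⟩
    have ha : a * a = 1 := Subtype.ext (by
      show cs.simple i * cs.simple i = 1
      exact cs.simple_mul_simple_self i)
    rw [hk2, pow_mul, sq_inr_inl cs L a ha, ← map_pow]
    have hphi : phi cs L a ((csT cs L).simple t) =
        (csT cs L).simple (stildeConj cs L (a : W) a.2 t) := phi_apply_simple cs L a t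
    rw [hphi]
    have hrel := (csT cs L).simple_mul_simple_pow (stildeConj cs L (a : W) a.2 t) t
    have hval : (((stildeConj cs L (a : W) a.2 t) : W) * (t : W)) = (cs.simple i * cs.simple i') ^ 2 := by
      rw [stildeConj_coe]
      show (cs.simple i * cs.simple i' * (cs.simple i)⁻¹) * cs.simple i' = _
      rw [cs.inv_simple, pow_two]
      simp [mul_assoc]
    have hdvd : (Mt cs L) (stildeConj cs L (a : W) a.2 t) t ∣ k := by
      rw [Mt_apply, hval]
      apply orderOf_dvd_of_pow_eq_one
      rw [← pow_mul, ← hk2]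
      exact cs.simple_mul_simple_pow i i'
    obtain ⟨c, hc⟩ := hdvd
    rw [hc, pow_mul, hrel, one_pow, map_one]
  · -- both zero
    have hLi : L (cs.simple i) = 0 := le_antisymm (not_lt.mp hi) (hnonneg i)
    have hLi' : L (cs.simple i') = 0 := le_antisymm (not_lt.mp hi') (hnonneg i')
    rw [thetaGen, thetaGen, dif_neg hi, dif_neg hi', ← map_mul, ← map_pow]
    have h : ((⟨cs.simple i, simple_mem_Wo cs L hLi⟩ *
        ⟨cs.simple i', simple_mem_Wo cs L hLi'⟩ : Wo cs L)) ^ M i i' = 1 := by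
      apply Subtype.ext
      show (cs.simple i * cs.simple i') ^ M i i' = 1
      exact cs.simple_mul_simple_pow i i'
    rw [h, map_one]

/-- The homomorphism `Θ : W →* Nt ⋊ W°`. -/
noncomputable def Theta (hweight : ∀ u v : W, cs.length (u * v) = cs.length u + cs.length v →
      L (u * v) = L u + L v) (hnonneg : ∀ i : B, 0 ≤ L (cs.simple i)) : W →* Gp cs L :=
  cs.lift ⟨thetaGen cs L hnonneg, thetaGen_liftable cs L hweight hnonneg⟩

lemma Theta_simple (i : B) :
    Theta cs L hweight hnonneg (cs.simple i) = thetaGen cs L hnonneg i :=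
  cs.lift_apply_simple _ i

lemma Theta_simple_pos {i : B} (h : 0 < L (cs.simple i)) :
    Theta cs L hweight hnonneg (cs.simple i) =
      SemidirectProduct.inl ((csT cs L).simple ⟨cs.simple i, simple_mem_stilde cs L h⟩) := by
  rw [Theta_simple, thetaGen, dif_pos h]

lemma Theta_simple_zero {i : B} (h : L (cs.simple i) = 0) :
    Theta cs L hweight hnonneg (cs.simple i) =
      SemidirectProduct.inr ⟨cs.simple i, simple_mem_Wo cs L h⟩ := by
  rw [Theta_simple, thetaGen, dif_neg (by rw [h]; exact lt_irrefl 0)]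

lemma Theta_Wo (x : W) (hx : x ∈ Wo cs L) :
    Theta cs L hweight hnonneg x = SemidirectProduct.inr ⟨x, hx⟩ := by
  induction hx using Subgroup.closure_induction with
  | mem y hy =>
      obtain ⟨ii, hii, rfl⟩ := hy
      rw [Theta_simple_zero cs L hweight hnonneg hii]
  | one => rw [map_one]; rfl
  | mul y z hy hz ihy ihz =>
      rw [map_mul, ihy, ihz, ← map_mul]
      rfl
  | inv y hy ihy =>
      rw [map_inv, ihy, ← map_inv]
      rfl

lemma Xi_Theta : (Xi cs L).comp (Theta cs L hweight hnonneg) = MonoidHom.id W := by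
  apply cs.ext_simple
  intro i
  rw [MonoidHom.comp_apply, MonoidHom.id_apply]
  by_cases h : 0 < L (cs.simple i)
  · rw [Theta_simple_pos cs L hweight hnonneg h, Xi_inl, f1_simple]
  · have hL : L (cs.simple i) = 0 := le_antisymm (not_lt.mp h) (hnonneg i)
    rw [Theta_simple_zero cs L hweight hnonneg hL, Xi_inr]

lemma Theta_Xi : (Theta cs L hweight hnonneg).comp (Xi cs L) = MonoidHom.id (Gp cs L) := by
  apply SemidirectProduct.hom_ext
  · apply (csT cs L).ext_simple
    intro t
    simp only [MonoidHom.comp_apply, MonoidHom.id_apply]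
    rw [Xi_inl, f1_simple]
    obtain ⟨w, hw, k, hk, ht⟩ := t.2
    have key : Theta cs L hweight hnonneg ((t : W)) =
        SemidirectProduct.inl ((csT cs L).simple t) := by
      rw [ht, map_mul, map_mul, map_inv]
      rw [Theta_Wo cs L hweight hnonneg w hw, Theta_simple_pos cs L hweight hnonneg hk]
      rw [← map_inv]
      have haut := SemidirectProduct.inl_aut (φ := phi cs L) (⟨w, hw⟩ : Wo cs L)
        ((csT cs L).simple ⟨cs.simple k, simple_mem_stilde cs L hk⟩)
      rw [← haut, phi_apply_simple]
      congr 1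
      congr 1
      apply Subtype.ext
      rw [stildeConj_coe]
      exact ht.symm
    exact key
  · apply MonoidHom.ext
    intro w
    simp only [MonoidHom.comp_apply, MonoidHom.id_apply]
    rw [Xi_inr, Theta_Wo cs L hweight hnonneg (w : W) w.2]

end Theta

end Stmt8

namespace Stmt8

variable {B W Γ : Type*} [Group W] [AddCommGroup Γ] [LinearOrder Γ] [IsOrderedAddMonoid Γ]
variable {M : CoxeterMatrix B} (cs : CoxeterSystem M W) (L : W → Γ)

/-- For a non-negative weight function `L` on a Coxeter system `(W,S)`,
`W` is the semidirect product `W° ⋉ W̃` (`W̃` is normal, `W° ∩ W̃ = 1`, `W = W° W̃`),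
and `(W̃, S̃)` is a Coxeter system. -/
theorem stmt8
    (hweight : ∀ u v : W, cs.length (u * v) = cs.length u + cs.length v →
      L (u * v) = L u + L v)
    (hnonneg : ∀ i : B, 0 ≤ L (cs.simple i)) :
    (Wtilde cs L).Normal ∧
    Wo cs L ⊓ Wtilde cs L = ⊥ ∧
    Wo cs L ⊔ Wtilde cs L = ⊤ ∧
    ∃ (M' : CoxeterMatrix (Stilde cs L)) (cs' : CoxeterSystem M' (Wtilde cs L)),
      ∀ t : Stilde cs L, ((cs'.simple t : Wtilde cs L) : W) = (t : W) := by
  have hXT := Xi_Theta cs L hweight hnonneg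
  have hTX := Theta_Xi cs L hweight hnonneg
  have hXTapp : ∀ x : W, Xi cs L (Theta cs L hweight hnonneg x) = x :=
    fun x => DFunLike.congr_fun hXT x
  have hTXapp : ∀ g : Gp cs L, Theta cs L hweight hnonneg (Xi cs L g) = g :=
    fun g => DFunLike.congr_fun hTX g
  have hTf1 : ∀ n : Nt cs L, Theta cs L hweight hnonneg (f1 cs L n) =
      SemidirectProduct.inl n := by
    intro n
    have := hTXapp (SemidirectProduct.inl n)
    rwa [Xi_inl] at this
  have hf1inj : Function.Injective (f1 cs L) := by
    intro n n' h
    have h2 : SemidirectProduct.inl (φ := phi cs L) n = SemidirectProduct.inl n' := by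
      rw [← hTf1 n, ← hTf1 n', h]
    exact SemidirectProduct.inl_injective h2
  have hrange : (f1 cs L).range = Wtilde cs L := by
    rw [MonoidHom.range_eq_map, ← (csT cs L).subgroup_closure_range_simple,
      MonoidHom.map_closure, ← Set.range_comp]
    have h : (f1 cs L) ∘ (csT cs L).simple = fun t : Stilde cs L => (t : W) :=
      funext (f1_simple cs L)
    rw [h, Subtype.range_coe]
    rfl
  refine ⟨?_, ?_, ?_, ?_⟩
  · -- Normality
    have hker : Wtilde cs L = (SemidirectProduct.rightHom.comp
        (Theta cs L hweight hnonneg)).ker := by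
      ext x
      rw [MonoidHom.mem_ker, MonoidHom.comp_apply]
      constructor
      · intro hx
        rw [← hrange] at hx
        obtain ⟨n, rfl⟩ := hx
        rw [hTf1, SemidirectProduct.rightHom_inl]
      · intro hx
        have hsplit : Theta cs L hweight hnonneg x =
            SemidirectProduct.inl (Theta cs L hweight hnonneg x).left := by
          have h := SemidirectProduct.inl_left_mul_inr_right (Theta cs L hweight hnonneg x)
          rw [← SemidirectProduct.rightHom_eq_right] at h
          rw [hx] at h
          rw [map_one, mul_one] at h
          exact h.symm
        have hx2 : x = f1 cs L (Theta cs L hweight hnonneg x).left := by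
          calc x = Xi cs L (Theta cs L hweight hnonneg x) := (hXTapp x).symm
            _ = Xi cs L (SemidirectProduct.inl (Theta cs L hweight hnonneg x).left) := by
                rw [← hsplit]
            _ = f1 cs L (Theta cs L hweight hnonneg x).left := Xi_inl cs L _
        rw [hx2, ← hrange]
        exact ⟨_, rfl⟩
    rw [hker]
    exact MonoidHom.normal_ker _
  · -- trivial intersection
    rw [eq_bot_iff]
    intro x hx
    obtain ⟨hx1, hx2⟩ := Subgroup.mem_inf.mp hx
    rw [← hrange] at hx2
    obtain ⟨n, hn⟩ := hx2
    have h1 : Theta cs L hweight hnonneg x = SemidirectProduct.inr ⟨x, hx1⟩ :=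
      Theta_Wo cs L hweight hnonneg x hx1
    have h2 : Theta cs L hweight hnonneg x = SemidirectProduct.inl n := by
      rw [← hn, hTf1]
    have h3 : ((1 : Wo cs L) : W) = x := by
      have := congrArg SemidirectProduct.right (h2.symm.trans h1)
      rw [SemidirectProduct.right_inl, SemidirectProduct.right_inr] at this
      exact congrArg Subtype.val this
    rw [Subgroup.mem_bot, ← h3, OneMemClass.coe_one]
  · -- join is everything
    rw [eq_top_iff, ← cs.subgroup_closure_range_simple]
    rw [Subgroup.closure_le]
    rintro x ⟨i, rfl⟩
    by_cases h : 0 < L (cs.simple i)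
    · exact Subgroup.mem_sup_right (Subgroup.subset_closure (simple_mem_stilde cs L h))
    · exact Subgroup.mem_sup_left
        (simple_mem_Wo cs L (le_antisymm (not_lt.mp h) (hnonneg i)))
  · -- the Coxeter system on Wtilde
    refine ⟨Mt cs L, ?_⟩
    let e : Nt cs L ≃* (Wtilde cs L) :=
      (MonoidHom.ofInjective hf1inj).trans (MulEquiv.subgroupCongr hrange)
    refine ⟨⟨e.symm⟩, ?_⟩
    intro t
    show ((⟨e.symm⟩ : CoxeterSystem (Mt cs L) (Wtilde cs L)).simple t : W) = (t : W)
    have h1 : (⟨e.symm⟩ : CoxeterSystem (Mt cs L) (Wtilde cs L)).simple t =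
        e (PresentedGroup.of t) := by
      show e.symm.symm (PresentedGroup.of t) = e (PresentedGroup.of t)
      rw [MulEquiv.symm_symm]
    rw [h1]
    show ((MulEquiv.subgroupCongr hrange) ((MonoidHom.ofInjective hf1inj)
      (PresentedGroup.of t)) : W) = (t : W)
    rw [MulEquiv.subgroupCongr_apply]
    have h2 : ((MonoidHom.ofInjective hf1inj (PresentedGroup.of t)) : W) =
        f1 cs L (PresentedGroup.of t) := rfl
    rw [h2]
    exact f1_simple cs L t

end Stmt8
end

section
/- Let W be an affine Weyl group of type C̃_2 (diagram t = s = t' with weights L(t)=a, L(s)=b, L(t')=c, a ≥ c ≥ 0, b ≥ 0). Let 𝒲^max = { w ∈ 𝒲 : L(w) = ν_L } where 𝒲 is the union of proper standard parabolic subgroups and ν_L = max_{I ⊊ S} L(w_I). If a > c and b > 0 then 𝒲^max = {tsts}; if a > c and b = 0 then 𝒲^max = {tsts, tst}; if a = c > 0 and b > 0 then 𝒲^max = {tsts, t'st's}. -/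
namespace Stmt12

/-- The Coxeter matrix of type `C̃₂` (generators `t, s, t'` with `m(t,s) = m(s,t') = 4`,
`m(t,t') = 2`). -/
def C2Matrix : CoxeterMatrix (Fin 3) where
  M := Matrix.of ![![1, 4, 2], ![4, 1, 4], ![2, 4, 1]]
  off_diagonal := by
    intro i i' h
    fin_cases i <;> fin_cases i' <;> simp_all

variable {W Γ : Type*} [Group W] [AddCommGroup Γ] [LinearOrder Γ] [IsOrderedAddMonoid Γ]
variable (cs : CoxeterSystem C2Matrix W)

/-- The standard parabolic subgroup `W_I`. -/
def par (I : Set (Fin 3)) : Subgroup W := Subgroup.closure (cs.simple '' I)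

/-- `w` is a longest element of `W_I`. -/
def IsLongest (I : Set (Fin 3)) (w : W) : Prop :=
  w ∈ par cs I ∧ ∀ v ∈ par cs I, cs.length v ≤ cs.length w

/-- `𝒲^max = { w ∈ 𝒲 : L w = ν_L }`, where `𝒲` is the union of the proper standard
parabolic subgroups. -/
def Wmax (L : W → Γ) (ν : Γ) : Set W :=
  {w | (∃ I : Set (Fin 3), I ≠ Set.univ ∧ w ∈ par cs I) ∧ L w = ν}

/-! ### Auxiliary: arithmetic helpers -/

section Arith
variable {x1 x2 x3 x4 y1 y2 y3 y4 : Γ}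

lemma le4 (h1 : x1 ≤ y1) (h2 : x2 ≤ y2) (h3 : x3 ≤ y3) (h4 : x4 ≤ y4) :
    x1 + x2 + x3 + x4 ≤ y1 + y2 + y3 + y4 :=
  add_le_add (add_le_add (add_le_add h1 h2) h3) h4

lemma lt1 (h1 : x1 < y1) (h2 : x2 ≤ y2) (h3 : x3 ≤ y3) (h4 : x4 ≤ y4) :
    x1 + x2 + x3 + x4 < y1 + y2 + y3 + y4 :=
  add_lt_add_of_lt_of_le (add_lt_add_of_lt_of_le (add_lt_add_of_lt_of_le h1 h2) h3) h4

lemma lt2 (h1 : x1 ≤ y1) (h2 : x2 < y2) (h3 : x3 ≤ y3) (h4 : x4 ≤ y4) :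
    x1 + x2 + x3 + x4 < y1 + y2 + y3 + y4 :=
  add_lt_add_of_lt_of_le (add_lt_add_of_lt_of_le (add_lt_add_of_le_of_lt h1 h2) h3) h4

lemma lt3 (h1 : x1 ≤ y1) (h2 : x2 ≤ y2) (h3 : x3 < y3) (h4 : x4 ≤ y4) :
    x1 + x2 + x3 + x4 < y1 + y2 + y3 + y4 :=
  add_lt_add_of_lt_of_le (add_lt_add_of_le_of_lt (add_le_add h1 h2) h3) h4

lemma lt4 (h1 : x1 ≤ y1) (h2 : x2 ≤ y2) (h3 : x3 ≤ y3) (h4 : x4 < y4) :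
    x1 + x2 + x3 + x4 < y1 + y2 + y3 + y4 :=
  add_lt_add_of_le_of_lt (add_le_add (add_le_add h1 h2) h3) h4

end Arith

/-! ### Auxiliary: group-theoretic helpers -/

section Grp
variable {G : Type*} [Group G]

lemma braid_of_pow4 {x y : G} (hx : x * x = 1) (hy : y * y = 1) (h : (x * y) ^ 4 = 1) :
    x * y * x * y = y * x * y * x := by
  have hxinv : x⁻¹ = x := inv_eq_of_mul_eq_one_left hx
  have hyinv : y⁻¹ = y := inv_eq_of_mul_eq_one_left hy
  have hz : (x * y * x * y) * (x * y * x * y) = 1 := by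
    rw [← h, pow_succ, pow_succ, pow_succ, pow_one]; simp only [mul_assoc]
  calc x * y * x * y = (x * y * x * y)⁻¹ := eq_inv_of_mul_eq_one_left hz
    _ = y⁻¹ * x⁻¹ * (y⁻¹ * x⁻¹) := by group
    _ = y * x * y * x := by rw [hxinv, hyinv, ← mul_assoc]

lemma comm_of_pow2 {x y : G} (hx : x * x = 1) (hy : y * y = 1) (h : (x * y) ^ 2 = 1) :
    x * y = y * x := by
  have hxinv : x⁻¹ = x := inv_eq_of_mul_eq_one_left hx
  have hyinv : y⁻¹ = y := inv_eq_of_mul_eq_one_left hy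
  have hz : (x * y) * (x * y) = 1 := by rw [← h, pow_two]
  calc x * y = (x * y)⁻¹ := eq_inv_of_mul_eq_one_left hz
    _ = y⁻¹ * x⁻¹ := by group
    _ = y * x := by rw [hxinv, hyinv]

lemma mem_closure_pair_dihedral {x y : G} (hx : x * x = 1) (hy : y * y = 1)
    (hb : x * y * x * y = y * x * y * x) {w : G} (hw : w ∈ Subgroup.closure {x, y}) :
    w = 1 ∨ w = x ∨ w = y ∨ w = x * y ∨ w = y * x ∨ w = x * y * x ∨ w = y * x * y ∨
      w = x * y * x * y := by
  have key : ∀ u, u = x ∨ u = y → ∀ z, (z = 1 ∨ z = x ∨ z = y ∨ z = x * y ∨ z = y * x ∨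
      z = x * y * x ∨ z = y * x * y ∨ z = x * y * x * y) →
      (u * z = 1 ∨ u * z = x ∨ u * z = y ∨ u * z = x * y ∨ u * z = y * x ∨
      u * z = x * y * x ∨ u * z = y * x * y ∨ u * z = x * y * x * y) := by
    intro u hu z ih
    rcases hu with rfl | rfl
    · rcases ih with rfl | rfl | rfl | rfl | rfl | rfl | rfl | rfl
      · exact Or.inr <| Or.inl (mul_one u)
      · exact Or.inl hx
      · exact Or.inr <| Or.inr <| Or.inr <| Or.inl rfl
      · refine Or.inr <| Or.inr <| Or.inl ?_
        rw [← mul_assoc, hx, one_mul]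
      · exact Or.inr <| Or.inr <| Or.inr <| Or.inr <| Or.inr <| Or.inl (mul_assoc _ _ _).symm
      · refine Or.inr <| Or.inr <| Or.inr <| Or.inr <| Or.inl ?_
        simp only [← mul_assoc]; rw [hx, one_mul]
      · refine Or.inr <| Or.inr <| Or.inr <| Or.inr <| Or.inr <| Or.inr <| Or.inr ?_
        simp only [← mul_assoc]
      · refine Or.inr <| Or.inr <| Or.inr <| Or.inr <| Or.inr <| Or.inr <| Or.inl ?_
        simp only [← mul_assoc]; rw [hx, one_mul]
    · rcases ih with rfl | rfl | rfl | rfl | rfl | rfl | rfl | rfl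
      · exact Or.inr <| Or.inr <| Or.inl (mul_one u)
      · exact Or.inr <| Or.inr <| Or.inr <| Or.inr <| Or.inl rfl
      · exact Or.inl hy
      · exact Or.inr <| Or.inr <| Or.inr <| Or.inr <| Or.inr <| Or.inr <|
          Or.inl (mul_assoc _ _ _).symm
      · refine Or.inr <| Or.inl ?_
        simp only [← mul_assoc]; rw [hy, one_mul]
      · refine Or.inr <| Or.inr <| Or.inr <| Or.inr <| Or.inr <| Or.inr <| Or.inr ?_
        simp only [← mul_assoc]; rw [← hb]
      · refine Or.inr <| Or.inr <| Or.inr <| Or.inl ?_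
        simp only [← mul_assoc]; rw [hy, one_mul]
      · refine Or.inr <| Or.inr <| Or.inr <| Or.inr <| Or.inr <| Or.inl ?_
        rw [hb]; simp only [← mul_assoc]; rw [hy, one_mul]
  induction hw using Subgroup.closure_induction_left with
  | one => exact Or.inl rfl
  | mul_left u hu z hz ih =>
    rcases hu with rfl | hu
    · exact key _ (Or.inl rfl) z ih
    · exact key _ (Or.inr hu) z ih
  | inv_mul_cancel u hu z hz ih =>
    have hu' : u = x ∨ u = y := by
      rcases hu with rfl | hu
      · exact Or.inl rfl
      · exact Or.inr hu
    have hinv : u⁻¹ = u := by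
      rcases hu' with rfl | rfl
      · exact inv_eq_of_mul_eq_one_left hx
      · exact inv_eq_of_mul_eq_one_left hy
    rw [hinv]
    exact key _ hu' z ih

lemma mem_closure_pair_comm {x y : G} (hx : x * x = 1) (hy : y * y = 1)
    (hc : x * y = y * x) {w : G} (hw : w ∈ Subgroup.closure {x, y}) :
    w = 1 ∨ w = x ∨ w = y ∨ w = x * y := by
  have key : ∀ u, u = x ∨ u = y → ∀ z, (z = 1 ∨ z = x ∨ z = y ∨ z = x * y) →
      (u * z = 1 ∨ u * z = x ∨ u * z = y ∨ u * z = x * y) := by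
    intro u hu z ih
    rcases hu with rfl | rfl
    · rcases ih with rfl | rfl | rfl | rfl
      · exact Or.inr <| Or.inl (mul_one u)
      · exact Or.inl hx
      · exact Or.inr <| Or.inr <| Or.inr rfl
      · refine Or.inr <| Or.inr <| Or.inl ?_
        rw [← mul_assoc, hx, one_mul]
    · rcases ih with rfl | rfl | rfl | rfl
      · exact Or.inr <| Or.inr <| Or.inl (mul_one u)
      · exact Or.inr <| Or.inr <| Or.inr hc.symm
      · exact Or.inl hy
      · refine Or.inr <| Or.inl ?_
        rw [hc, ← mul_assoc, hy, one_mul]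
  induction hw using Subgroup.closure_induction_left with
  | one => exact Or.inl rfl
  | mul_left u hu z hz ih =>
    rcases hu with rfl | hu
    · exact key _ (Or.inl rfl) z ih
    · exact key _ (Or.inr hu) z ih
  | inv_mul_cancel u hu z hz ih =>
    have hu' : u = x ∨ u = y := by
      rcases hu with rfl | hu
      · exact Or.inl rfl
      · exact Or.inr hu
    have hinv : u⁻¹ = u := by
      rcases hu' with rfl | rfl
      · exact inv_eq_of_mul_eq_one_left hx
      · exact inv_eq_of_mul_eq_one_left hy
    rw [hinv]
    exact key _ hu' z ih

end Grp

/-! ### Auxiliary: a concrete model of the `C̃₂` Coxeter group -/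

abbrev Pt := (ZMod 4) × (ZMod 4)

def g : Fin 3 → Equiv.Perm Pt
  | 0 => Function.Involutive.toPerm (fun p => (-p.1, p.2)) (by unfold Function.Involutive; decide)
  | 1 => Function.Involutive.toPerm (fun p => (p.2, p.1)) (by unfold Function.Involutive; decide)
  | 2 => Function.Involutive.toPerm (fun p => (p.1, 2 - p.2)) (by unfold Function.Involutive; decide)

lemma gLift : C2Matrix.IsLiftable g := by
  unfold CoxeterMatrix.IsLiftable; decide

noncomputable def ph : W →* Equiv.Perm Pt := cs.lift ⟨g, gLift⟩

lemma ph_simple (i : Fin 3) : ph cs (cs.simple i) = g i := cs.lift_apply_simple gLift i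

/-! ### Auxiliary: length computations -/

lemma len2 (i j : Fin 3) (h : g i * g j ≠ 1) :
    cs.length (cs.simple i * cs.simple j) = 2 := by
  have hub := cs.length_mul_le (cs.simple i) (cs.simple j)
  rw [cs.length_simple, cs.length_simple] at hub
  have hp := cs.length_mul_mod_two (cs.simple i) (cs.simple j)
  rw [cs.length_simple, cs.length_simple] at hp
  have hne : cs.simple i * cs.simple j ≠ 1 := by
    intro he
    apply h
    rw [← ph_simple cs i, ← ph_simple cs j, ← map_mul, he, map_one]
  have h0 : cs.length (cs.simple i * cs.simple j) ≠ 0 :=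
    fun hh => hne (cs.length_eq_zero_iff.mp hh)
  set n := cs.length (cs.simple i * cs.simple j) with hn
  omega

lemma len3 (i j k : Fin 3) (h2 : cs.length (cs.simple i * cs.simple j) = 2)
    (h : ∀ m, g i * g j * g k ≠ g m) :
    cs.length (cs.simple i * cs.simple j * cs.simple k) = 3 := by
  have hub := cs.length_mul_le (cs.simple i * cs.simple j) (cs.simple k)
  rw [cs.length_simple, h2] at hub
  have hp := cs.length_mul_mod_two (cs.simple i * cs.simple j) (cs.simple k)
  rw [cs.length_simple, h2] at hp
  have hne : cs.length (cs.simple i * cs.simple j * cs.simple k) ≠ 1 := by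
    intro he
    obtain ⟨m, hm⟩ := cs.length_eq_one_iff.mp he
    apply h m
    rw [← ph_simple cs i, ← ph_simple cs j, ← ph_simple cs k, ← map_mul, ← map_mul, hm,
      ph_simple]
  set n := cs.length (cs.simple i * cs.simple j * cs.simple k) with hn
  omega

lemma len4 (i j k l : Fin 3)
    (h3 : cs.length (cs.simple i * cs.simple j * cs.simple k) = 3)
    (h1 : g i * g j * g k * g l ≠ 1)
    (h : ∀ m n, g i * g j * g k * g l ≠ g m * g n) :
    cs.length (cs.simple i * cs.simple j * cs.simple k * cs.simple l) = 4 := by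
  have hub := cs.length_mul_le (cs.simple i * cs.simple j * cs.simple k) (cs.simple l)
  rw [cs.length_simple, h3] at hub
  have hp := cs.length_mul_mod_two (cs.simple i * cs.simple j * cs.simple k) (cs.simple l)
  rw [cs.length_simple, h3] at hp
  have hph : ph cs (cs.simple i * cs.simple j * cs.simple k * cs.simple l)
      = g i * g j * g k * g l := by
    rw [← ph_simple cs i, ← ph_simple cs j, ← ph_simple cs k, ← ph_simple cs l,
      ← map_mul, ← map_mul, ← map_mul]
  have hne0 : cs.simple i * cs.simple j * cs.simple k * cs.simple l ≠ 1 := by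
    intro he
    apply h1
    rw [← hph, he, map_one]
  have hne2 : cs.length (cs.simple i * cs.simple j * cs.simple k * cs.simple l) ≠ 2 := by
    intro he
    obtain ⟨ω, hlen, hw⟩ := cs.exists_reduced_word
      (cs.simple i * cs.simple j * cs.simple k * cs.simple l)
    rw [CoxeterSystem.IsReduced, ← hw, he] at hlen
    match ω, hlen with
    | [m, n], _ =>
      apply h m n
      rw [← hph, hw]
      simp [CoxeterSystem.wordProd, map_mul, ph_simple]
  have h0 : cs.length (cs.simple i * cs.simple j * cs.simple k * cs.simple l) ≠ 0 :=
    fun hh => hne0 (cs.length_eq_zero_iff.mp hh)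
  set n := cs.length (cs.simple i * cs.simple j * cs.simple k * cs.simple l) with hn
  omega

/-! ### Auxiliary: the three maximal proper parabolic subgroups -/

lemma mem_three {I : Set (Fin 3)} (hI : I ≠ Set.univ) {w : W} (hw : w ∈ par cs I) :
    w ∈ par cs {0, 1} ∨ w ∈ par cs {0, 2} ∨ w ∈ par cs {1, 2} := by
  obtain ⟨k, hk⟩ := (Set.ne_univ_iff_exists_notMem _).mp hI
  have hmono : ∀ J : Set (Fin 3), I ⊆ J → w ∈ par cs J := fun J hJ =>
    Subgroup.closure_mono (Set.image_mono hJ) hw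
  fin_cases k
  · refine Or.inr (Or.inr (hmono _ ?_))
    intro x hx
    fin_cases x
    · exact absurd hx hk
    · simp
    · simp
  · refine Or.inr (Or.inl (hmono _ ?_))
    intro x hx
    fin_cases x
    · simp
    · exact absurd hx hk
    · simp
  · refine Or.inl (hmono _ ?_)
    intro x hx
    fin_cases x
    · simp
    · simp
    · exact absurd hx hk

lemma par01 : par cs {0, 1} = Subgroup.closure {cs.simple 0, cs.simple 1} := by
  unfold par; rw [Set.image_insert_eq, Set.image_singleton]

lemma par02 : par cs {0, 2} = Subgroup.closure {cs.simple 0, cs.simple 2} := by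
  unfold par; rw [Set.image_insert_eq, Set.image_singleton]

lemma par12 : par cs {1, 2} = Subgroup.closure {cs.simple 2, cs.simple 1} := by
  unfold par; rw [Set.image_insert_eq, Set.image_singleton, Set.pair_comm]

lemma ne01 : ({0, 1} : Set (Fin 3)) ≠ Set.univ := by
  intro h
  have h2 := Set.eq_univ_iff_forall.mp h 2
  simp at h2

lemma ne12 : ({1, 2} : Set (Fin 3)) ≠ Set.univ := by
  intro h
  have h2 := Set.eq_univ_iff_forall.mp h 0
  simp at h2

/-- Let `W` be the affine Weyl group of type `C̃₂` with weights
`L t = a ≥ L t' = c ≥ 0` and `L s = b ≥ 0`.  Then: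
if `a > c` and `b > 0`, `𝒲^max = {tsts}`;
if `a > c` and `b = 0`, `𝒲^max = {tsts, tst}`;
if `a = c > 0` and `b > 0`, `𝒲^max = {tsts, t'st's}`. -/
theorem stmt12 (L : W → Γ) (a b c : Γ)
    (hweight : ∀ u v : W, cs.length (u * v) = cs.length u + cs.length v →
      L (u * v) = L u + L v)
    (ht : L (cs.simple 0) = a) (hs : L (cs.simple 1) = b) (ht' : L (cs.simple 2) = c)
    (hc : 0 ≤ c) (hb : 0 ≤ b) (hac : c ≤ a)
    (ν : Γ)
    (hν₁ : ∃ (I : Set (Fin 3)) (w₀ : W), I ≠ Set.univ ∧ IsLongest cs I w₀ ∧ L w₀ = ν)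
    (hν₂ : ∀ (I : Set (Fin 3)) (w₀ : W), I ≠ Set.univ → IsLongest cs I w₀ → L w₀ ≤ ν) :
    (a > c → 0 < b → Wmax cs L ν =
      {cs.simple 0 * cs.simple 1 * cs.simple 0 * cs.simple 1}) ∧
    (a > c → b = 0 → Wmax cs L ν =
      {cs.simple 0 * cs.simple 1 * cs.simple 0 * cs.simple 1,
       cs.simple 0 * cs.simple 1 * cs.simple 0}) ∧
    (a = c → 0 < a → 0 < b → Wmax cs L ν =
      {cs.simple 0 * cs.simple 1 * cs.simple 0 * cs.simple 1,
       cs.simple 2 * cs.simple 1 * cs.simple 2 * cs.simple 1}) := by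
  have ha0 : (0 : Γ) ≤ a := hc.trans hac
  -- relations
  have hx0 : cs.simple 0 * cs.simple 0 = 1 := cs.simple_mul_simple_self 0
  have hx1 : cs.simple 1 * cs.simple 1 = 1 := cs.simple_mul_simple_self 1
  have hx2 : cs.simple 2 * cs.simple 2 = 1 := cs.simple_mul_simple_self 2
  have hp01 : (cs.simple 0 * cs.simple 1) ^ 4 = 1 := cs.simple_mul_simple_pow 0 1
  have hp21 : (cs.simple 2 * cs.simple 1) ^ 4 = 1 := cs.simple_mul_simple_pow 2 1
  have hp02 : (cs.simple 0 * cs.simple 2) ^ 2 = 1 := cs.simple_mul_simple_pow 0 2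
  have braid01 := braid_of_pow4 hx0 hx1 hp01
  have braid21 := braid_of_pow4 hx2 hx1 hp21
  have comm02 := comm_of_pow2 hx0 hx2 hp02
  -- memberships
  have hm01t : cs.simple 0 ∈ par cs {0, 1} :=
    Subgroup.subset_closure (Set.mem_image_of_mem _ (by simp))
  have hm01s : cs.simple 1 ∈ par cs {0, 1} :=
    Subgroup.subset_closure (Set.mem_image_of_mem _ (by simp))
  have hm12u : cs.simple 2 ∈ par cs {1, 2} :=
    Subgroup.subset_closure (Set.mem_image_of_mem _ (by simp))
  have hm12s : cs.simple 1 ∈ par cs {1, 2} :=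
    Subgroup.subset_closure (Set.mem_image_of_mem _ (by simp))
  have hmtsts : cs.simple 0 * cs.simple 1 * cs.simple 0 * cs.simple 1 ∈ par cs {0, 1} :=
    mul_mem (mul_mem (mul_mem hm01t hm01s) hm01t) hm01s
  have hmusus : cs.simple 2 * cs.simple 1 * cs.simple 2 * cs.simple 1 ∈ par cs {1, 2} :=
    mul_mem (mul_mem (mul_mem hm12u hm12s) hm12u) hm12s
  -- lengths
  have l_ts := len2 cs 0 1 (by decide)
  have l_st := len2 cs 1 0 (by decide)
  have l_us := len2 cs 2 1 (by decide)
  have l_su := len2 cs 1 2 (by decide)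
  have l_tu := len2 cs 0 2 (by decide)
  have l_tst := len3 cs 0 1 0 l_ts (by decide)
  have l_sts := len3 cs 1 0 1 l_st (by decide)
  have l_usu := len3 cs 2 1 2 l_us (by decide)
  have l_sus := len3 cs 1 2 1 l_su (by decide)
  have l_tsts := len4 cs 0 1 0 1 l_tst (by decide) (by decide)
  have l_usus := len4 cs 2 1 2 1 l_usu (by decide) (by decide)
  -- weights
  have L1 : L (1 : W) = 0 := by
    have h := hweight 1 1 (by simp)
    rw [mul_one] at h
    exact (left_eq_add.mp h)
  have Lts : L (cs.simple 0 * cs.simple 1) = a + b := by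
    have h := hweight (cs.simple 0) (cs.simple 1)
      (by rw [l_ts, cs.length_simple, cs.length_simple])
    rw [ht, hs] at h; exact h
  have Lst : L (cs.simple 1 * cs.simple 0) = b + a := by
    have h := hweight (cs.simple 1) (cs.simple 0)
      (by rw [l_st, cs.length_simple, cs.length_simple])
    rw [ht, hs] at h; exact h
  have Lus : L (cs.simple 2 * cs.simple 1) = c + b := by
    have h := hweight (cs.simple 2) (cs.simple 1)
      (by rw [l_us, cs.length_simple, cs.length_simple])
    rw [ht', hs] at h; exact h
  have Lsu : L (cs.simple 1 * cs.simple 2) = b + c := by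
    have h := hweight (cs.simple 1) (cs.simple 2)
      (by rw [l_su, cs.length_simple, cs.length_simple])
    rw [ht', hs] at h; exact h
  have Ltu : L (cs.simple 0 * cs.simple 2) = a + c := by
    have h := hweight (cs.simple 0) (cs.simple 2)
      (by rw [l_tu, cs.length_simple, cs.length_simple])
    rw [ht, ht'] at h; exact h
  have Ltst : L (cs.simple 0 * cs.simple 1 * cs.simple 0) = a + b + a := by
    have h := hweight (cs.simple 0 * cs.simple 1) (cs.simple 0)
      (by rw [l_tst, l_ts, cs.length_simple])
    rw [Lts, ht] at h; exact h
  have Lsts : L (cs.simple 1 * cs.simple 0 * cs.simple 1) = b + a + b := by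
    have h := hweight (cs.simple 1 * cs.simple 0) (cs.simple 1)
      (by rw [l_sts, l_st, cs.length_simple])
    rw [Lst, hs] at h; exact h
  have Lusu : L (cs.simple 2 * cs.simple 1 * cs.simple 2) = c + b + c := by
    have h := hweight (cs.simple 2 * cs.simple 1) (cs.simple 2)
      (by rw [l_usu, l_us, cs.length_simple])
    rw [Lus, ht'] at h; exact h
  have Lsus : L (cs.simple 1 * cs.simple 2 * cs.simple 1) = b + c + b := by
    have h := hweight (cs.simple 1 * cs.simple 2) (cs.simple 1)
      (by rw [l_sus, l_su, cs.length_simple])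
    rw [Lsu, hs] at h; exact h
  have Ltsts : L (cs.simple 0 * cs.simple 1 * cs.simple 0 * cs.simple 1) = a + b + a + b := by
    have h := hweight (cs.simple 0 * cs.simple 1 * cs.simple 0) (cs.simple 1)
      (by rw [l_tsts, l_tst, cs.length_simple])
    rw [Ltst, hs] at h; exact h
  have Lusus : L (cs.simple 2 * cs.simple 1 * cs.simple 2 * cs.simple 1) = c + b + c + b := by
    have h := hweight (cs.simple 2 * cs.simple 1 * cs.simple 2) (cs.simple 1)
      (by rw [l_usus, l_usu, cs.length_simple])
    rw [Lusu, hs] at h; exact h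
  -- the longest element of `W_{0,1}`
  have hlongest : IsLongest cs {0, 1} (cs.simple 0 * cs.simple 1 * cs.simple 0 * cs.simple 1) := by
    refine ⟨hmtsts, ?_⟩
    intro v hv
    rw [par01] at hv
    rcases mem_closure_pair_dihedral hx0 hx1 braid01 hv with
        rfl | rfl | rfl | rfl | rfl | rfl | rfl | rfl <;>
      simp [l_tsts, l_ts, l_st, l_tst, l_sts, cs.length_one, cs.length_simple]
  -- value of ν
  have hnu_ge : a + b + a + b ≤ ν := by
    rw [← Ltsts]
    exact hν₂ {0, 1} _ ne01 hlongest
  have hnu_le : ν ≤ a + b + a + b := by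
    obtain ⟨I, w₀, hI, hlong, hLw⟩ := hν₁
    rw [← hLw]
    rcases mem_three cs hI hlong.1 with h | h | h
    · rw [par01] at h
      rcases mem_closure_pair_dihedral hx0 hx1 braid01 h with
          rfl | rfl | rfl | rfl | rfl | rfl | rfl | rfl
      · rw [L1]
        calc (0 : Γ) = 0 + 0 + 0 + 0 := by abel
          _ ≤ a + b + a + b := le4 ha0 hb ha0 hb
      · rw [ht]
        calc a = a + 0 + 0 + 0 := by abel
          _ ≤ a + b + a + b := le4 le_rfl hb ha0 hb
      · rw [hs]
        calc b = 0 + b + 0 + 0 := by abel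
          _ ≤ a + b + a + b := le4 ha0 le_rfl ha0 hb
      · rw [Lts]
        calc a + b = a + b + 0 + 0 := by abel
          _ ≤ a + b + a + b := le4 le_rfl le_rfl ha0 hb
      · rw [Lst]
        calc b + a = 0 + b + a + 0 := by abel
          _ ≤ a + b + a + b := le4 ha0 le_rfl le_rfl hb
      · rw [Ltst]
        calc a + b + a = a + b + a + 0 := by abel
          _ ≤ a + b + a + b := le4 le_rfl le_rfl le_rfl hb
      · rw [Lsts]
        calc b + a + b = 0 + b + a + b := by abel
          _ ≤ a + b + a + b := le4 ha0 le_rfl le_rfl le_rfl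
      · rw [Ltsts]
    · rw [par02] at h
      rcases mem_closure_pair_comm hx0 hx2 comm02 h with rfl | rfl | rfl | rfl
      · rw [L1]
        calc (0 : Γ) = 0 + 0 + 0 + 0 := by abel
          _ ≤ a + b + a + b := le4 ha0 hb ha0 hb
      · rw [ht]
        calc a = a + 0 + 0 + 0 := by abel
          _ ≤ a + b + a + b := le4 le_rfl hb ha0 hb
      · rw [ht']
        calc c = c + 0 + 0 + 0 := by abel
          _ ≤ a + b + a + b := le4 hac hb ha0 hb
      · rw [Ltu]
        calc a + c = a + 0 + c + 0 := by abel
          _ ≤ a + b + a + b := le4 le_rfl hb hac hb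
    · rw [par12] at h
      rcases mem_closure_pair_dihedral hx2 hx1 braid21 h with
          rfl | rfl | rfl | rfl | rfl | rfl | rfl | rfl
      · rw [L1]
        calc (0 : Γ) = 0 + 0 + 0 + 0 := by abel
          _ ≤ a + b + a + b := le4 ha0 hb ha0 hb
      · rw [ht']
        calc c = c + 0 + 0 + 0 := by abel
          _ ≤ a + b + a + b := le4 hac hb ha0 hb
      · rw [hs]
        calc b = 0 + b + 0 + 0 := by abel
          _ ≤ a + b + a + b := le4 ha0 le_rfl ha0 hb
      · rw [Lus]
        calc c + b = c + b + 0 + 0 := by abel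
          _ ≤ a + b + a + b := le4 hac le_rfl ha0 hb
      · rw [Lsu]
        calc b + c = 0 + b + c + 0 := by abel
          _ ≤ a + b + a + b := le4 ha0 le_rfl hac hb
      · rw [Lusu]
        calc c + b + c = c + b + c + 0 := by abel
          _ ≤ a + b + a + b := le4 hac le_rfl hac hb
      · rw [Lsus]
        calc b + c + b = 0 + b + c + b := by abel
          _ ≤ a + b + a + b := le4 ha0 le_rfl hac le_rfl
      · rw [Lusus]
        exact le4 hac le_rfl hac le_rfl
  have hν : ν = a + b + a + b := le_antisymm hnu_le hnu_ge
  refine ⟨?_, ?_, ?_⟩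
  · -- `a > c`, `0 < b`
    intro hca hb0
    have ha0' : (0 : Γ) < a := lt_of_le_of_lt hc hca
    ext w
    simp only [Wmax, Set.mem_setOf_eq, Set.mem_singleton_iff]
    constructor
    · rintro ⟨⟨I, hI, hmem⟩, hLw⟩
      rw [hν] at hLw
      set R := a + b + a + b with hR
      rcases mem_three cs hI hmem with h | h | h
      · rw [par01] at h
        rcases mem_closure_pair_dihedral hx0 hx1 braid01 h with
            rfl | rfl | rfl | rfl | rfl | rfl | rfl | rfl
        · rw [L1] at hLw
          exact absurd hLw (ne_of_lt (by
            calc (0 : Γ) = 0 + 0 + 0 + 0 := by abel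
              _ < R := lt4 ha0 hb ha0 hb0))
        · rw [ht] at hLw
          exact absurd hLw (ne_of_lt (by
            calc a = a + 0 + 0 + 0 := by abel
              _ < R := lt4 le_rfl hb ha0 hb0))
        · rw [hs] at hLw
          exact absurd hLw (ne_of_lt (by
            calc b = 0 + b + 0 + 0 := by abel
              _ < R := lt4 ha0 le_rfl ha0 hb0))
        · rw [Lts] at hLw
          exact absurd hLw (ne_of_lt (by
            calc a + b = a + b + 0 + 0 := by abel
              _ < R := lt4 le_rfl le_rfl ha0 hb0))
        · rw [Lst] at hLw
          exact absurd hLw (ne_of_lt (by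
            calc b + a = 0 + b + a + 0 := by abel
              _ < R := lt4 ha0 le_rfl le_rfl hb0))
        · rw [Ltst] at hLw
          exact absurd hLw (ne_of_lt (by
            calc a + b + a = a + b + a + 0 := by abel
              _ < R := lt4 le_rfl le_rfl le_rfl hb0))
        · rw [Lsts] at hLw
          exact absurd hLw (ne_of_lt (by
            calc b + a + b = 0 + b + a + b := by abel
              _ < R := lt1 ha0' le_rfl le_rfl le_rfl))
        · exact rfl
      · rw [par02] at h
        rcases mem_closure_pair_comm hx0 hx2 comm02 h with rfl | rfl | rfl | rfl
        · rw [L1] at hLw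
          exact absurd hLw (ne_of_lt (by
            calc (0 : Γ) = 0 + 0 + 0 + 0 := by abel
              _ < R := lt4 ha0 hb ha0 hb0))
        · rw [ht] at hLw
          exact absurd hLw (ne_of_lt (by
            calc a = a + 0 + 0 + 0 := by abel
              _ < R := lt4 le_rfl hb ha0 hb0))
        · rw [ht'] at hLw
          exact absurd hLw (ne_of_lt (by
            calc c = c + 0 + 0 + 0 := by abel
              _ < R := lt4 hac hb ha0 hb0))
        · rw [Ltu] at hLw
          exact absurd hLw (ne_of_lt (by
            calc a + c = a + 0 + c + 0 := by abel
              _ < R := lt4 le_rfl hb hac hb0))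
      · rw [par12] at h
        rcases mem_closure_pair_dihedral hx2 hx1 braid21 h with
            rfl | rfl | rfl | rfl | rfl | rfl | rfl | rfl
        · rw [L1] at hLw
          exact absurd hLw (ne_of_lt (by
            calc (0 : Γ) = 0 + 0 + 0 + 0 := by abel
              _ < R := lt4 ha0 hb ha0 hb0))
        · rw [ht'] at hLw
          exact absurd hLw (ne_of_lt (by
            calc c = c + 0 + 0 + 0 := by abel
              _ < R := lt4 hac hb ha0 hb0))
        · rw [hs] at hLw
          exact absurd hLw (ne_of_lt (by
            calc b = 0 + b + 0 + 0 := by abel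
              _ < R := lt4 ha0 le_rfl ha0 hb0))
        · rw [Lus] at hLw
          exact absurd hLw (ne_of_lt (by
            calc c + b = c + b + 0 + 0 := by abel
              _ < R := lt4 hac le_rfl ha0 hb0))
        · rw [Lsu] at hLw
          exact absurd hLw (ne_of_lt (by
            calc b + c = 0 + b + c + 0 := by abel
              _ < R := lt4 ha0 le_rfl hac hb0))
        · rw [Lusu] at hLw
          exact absurd hLw (ne_of_lt (by
            calc c + b + c = c + b + c + 0 := by abel
              _ < R := lt4 hac le_rfl hac hb0))
        · rw [Lsus] at hLw
          exact absurd hLw (ne_of_lt (by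
            calc b + c + b = 0 + b + c + b := by abel
              _ < R := lt1 ha0' le_rfl hac le_rfl))
        · rw [Lusus] at hLw
          exact absurd hLw (ne_of_lt (by
            calc c + b + c + b = c + b + c + b := by abel
              _ < R := lt1 hca le_rfl hac le_rfl))
    · rintro rfl
      exact ⟨⟨{0, 1}, ne01, hmtsts⟩, by rw [Ltsts, hν]⟩
  · -- `a > c`, `b = 0`
    intro hca hb0
    subst hb0
    have ha0' : (0 : Γ) < a := lt_of_le_of_lt hc hca
    ext w
    simp only [Wmax, Set.mem_setOf_eq, Set.mem_insert_iff, Set.mem_singleton_iff]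
    constructor
    · rintro ⟨⟨I, hI, hmem⟩, hLw⟩
      rw [hν] at hLw
      set R := a + 0 + a + 0 with hR
      rcases mem_three cs hI hmem with h | h | h
      · rw [par01] at h
        rcases mem_closure_pair_dihedral hx0 hx1 braid01 h with
            rfl | rfl | rfl | rfl | rfl | rfl | rfl | rfl
        · rw [L1] at hLw
          exact absurd hLw (ne_of_lt (by
            calc (0 : Γ) = 0 + 0 + 0 + 0 := by abel
              _ < R := lt1 ha0' le_rfl ha0 le_rfl))
        · rw [ht] at hLw
          exact absurd hLw (ne_of_lt (by
            calc a = a + 0 + 0 + 0 := by abel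
              _ < R := lt3 le_rfl le_rfl ha0' le_rfl))
        · rw [hs] at hLw
          exact absurd hLw (ne_of_lt (by
            calc (0 : Γ) = 0 + 0 + 0 + 0 := by abel
              _ < R := lt1 ha0' le_rfl ha0 le_rfl))
        · rw [Lts] at hLw
          exact absurd hLw (ne_of_lt (by
            calc a + 0 = a + 0 + 0 + 0 := by abel
              _ < R := lt3 le_rfl le_rfl ha0' le_rfl))
        · rw [Lst] at hLw
          exact absurd hLw (ne_of_lt (by
            calc 0 + a = 0 + 0 + a + 0 := by abel
              _ < R := lt1 ha0' le_rfl le_rfl le_rfl))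
        · exact Or.inr rfl
        · rw [Lsts] at hLw
          exact absurd hLw (ne_of_lt (by
            calc 0 + a + 0 = 0 + 0 + a + 0 := by abel
              _ < R := lt1 ha0' le_rfl le_rfl le_rfl))
        · exact Or.inl rfl
      · rw [par02] at h
        rcases mem_closure_pair_comm hx0 hx2 comm02 h with rfl | rfl | rfl | rfl
        · rw [L1] at hLw
          exact absurd hLw (ne_of_lt (by
            calc (0 : Γ) = 0 + 0 + 0 + 0 := by abel
              _ < R := lt1 ha0' le_rfl ha0 le_rfl))
        · rw [ht] at hLw
          exact absurd hLw (ne_of_lt (by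
            calc a = a + 0 + 0 + 0 := by abel
              _ < R := lt3 le_rfl le_rfl ha0' le_rfl))
        · rw [ht'] at hLw
          exact absurd hLw (ne_of_lt (by
            calc c = c + 0 + 0 + 0 := by abel
              _ < R := lt1 hca le_rfl ha0 le_rfl))
        · rw [Ltu] at hLw
          exact absurd hLw (ne_of_lt (by
            calc a + c = a + 0 + c + 0 := by abel
              _ < R := lt3 le_rfl le_rfl hca le_rfl))
      · rw [par12] at h
        rcases mem_closure_pair_dihedral hx2 hx1 braid21 h with
            rfl | rfl | rfl | rfl | rfl | rfl | rfl | rfl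
        · rw [L1] at hLw
          exact absurd hLw (ne_of_lt (by
            calc (0 : Γ) = 0 + 0 + 0 + 0 := by abel
              _ < R := lt1 ha0' le_rfl ha0 le_rfl))
        · rw [ht'] at hLw
          exact absurd hLw (ne_of_lt (by
            calc c = c + 0 + 0 + 0 := by abel
              _ < R := lt1 hca le_rfl ha0 le_rfl))
        · rw [hs] at hLw
          exact absurd hLw (ne_of_lt (by
            calc (0 : Γ) = 0 + 0 + 0 + 0 := by abel
              _ < R := lt1 ha0' le_rfl ha0 le_rfl))
        · rw [Lus] at hLw
          exact absurd hLw (ne_of_lt (by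
            calc c + 0 = c + 0 + 0 + 0 := by abel
              _ < R := lt1 hca le_rfl ha0 le_rfl))
        · rw [Lsu] at hLw
          exact absurd hLw (ne_of_lt (by
            calc 0 + c = 0 + 0 + c + 0 := by abel
              _ < R := lt1 ha0' le_rfl hac le_rfl))
        · rw [Lusu] at hLw
          exact absurd hLw (ne_of_lt (by
            calc c + 0 + c = c + 0 + c + 0 := by abel
              _ < R := lt1 hca le_rfl hac le_rfl))
        · rw [Lsus] at hLw
          exact absurd hLw (ne_of_lt (by
            calc 0 + c + 0 = 0 + 0 + c + 0 := by abel
              _ < R := lt1 ha0' le_rfl hac le_rfl))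
        · rw [Lusus] at hLw
          exact absurd hLw (ne_of_lt (by
            calc c + 0 + c + 0 = c + 0 + c + 0 := by abel
              _ < R := lt1 hca le_rfl hac le_rfl))
    · rintro (rfl | rfl)
      · exact ⟨⟨{0, 1}, ne01, hmtsts⟩, by rw [Ltsts, hν]⟩
      · refine ⟨⟨{0, 1}, ne01, mul_mem (mul_mem hm01t hm01s) hm01t⟩, ?_⟩
        rw [Ltst, hν]; abel
  · -- `a = c`, `0 < a`, `0 < b`
    intro haceq ha0' hb0
    subst haceq
    ext w
    simp only [Wmax, Set.mem_setOf_eq, Set.mem_insert_iff, Set.mem_singleton_iff]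
    constructor
    · rintro ⟨⟨I, hI, hmem⟩, hLw⟩
      rw [hν] at hLw
      set R := a + b + a + b with hR
      rcases mem_three cs hI hmem with h | h | h
      · rw [par01] at h
        rcases mem_closure_pair_dihedral hx0 hx1 braid01 h with
            rfl | rfl | rfl | rfl | rfl | rfl | rfl | rfl
        · rw [L1] at hLw
          exact absurd hLw (ne_of_lt (by
            calc (0 : Γ) = 0 + 0 + 0 + 0 := by abel
              _ < R := lt4 ha0 hb ha0 hb0))
        · rw [ht] at hLw
          exact absurd hLw (ne_of_lt (by
            calc a = a + 0 + 0 + 0 := by abel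
              _ < R := lt4 le_rfl hb ha0 hb0))
        · rw [hs] at hLw
          exact absurd hLw (ne_of_lt (by
            calc b = 0 + b + 0 + 0 := by abel
              _ < R := lt4 ha0 le_rfl ha0 hb0))
        · rw [Lts] at hLw
          exact absurd hLw (ne_of_lt (by
            calc a + b = a + b + 0 + 0 := by abel
              _ < R := lt4 le_rfl le_rfl ha0 hb0))
        · rw [Lst] at hLw
          exact absurd hLw (ne_of_lt (by
            calc b + a = 0 + b + a + 0 := by abel
              _ < R := lt4 ha0 le_rfl le_rfl hb0))
        · rw [Ltst] at hLw
          exact absurd hLw (ne_of_lt (by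
            calc a + b + a = a + b + a + 0 := by abel
              _ < R := lt4 le_rfl le_rfl le_rfl hb0))
        · rw [Lsts] at hLw
          exact absurd hLw (ne_of_lt (by
            calc b + a + b = 0 + b + a + b := by abel
              _ < R := lt1 ha0' le_rfl le_rfl le_rfl))
        · exact Or.inl rfl
      · rw [par02] at h
        rcases mem_closure_pair_comm hx0 hx2 comm02 h with rfl | rfl | rfl | rfl
        · rw [L1] at hLw
          exact absurd hLw (ne_of_lt (by
            calc (0 : Γ) = 0 + 0 + 0 + 0 := by abel
              _ < R := lt4 ha0 hb ha0 hb0))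
        · rw [ht] at hLw
          exact absurd hLw (ne_of_lt (by
            calc a = a + 0 + 0 + 0 := by abel
              _ < R := lt4 le_rfl hb ha0 hb0))
        · rw [ht'] at hLw
          exact absurd hLw (ne_of_lt (by
            calc a = a + 0 + 0 + 0 := by abel
              _ < R := lt4 le_rfl hb ha0 hb0))
        · rw [Ltu] at hLw
          exact absurd hLw (ne_of_lt (by
            calc a + a = a + 0 + a + 0 := by abel
              _ < R := lt2 le_rfl hb0 le_rfl hb))
      · rw [par12] at h
        rcases mem_closure_pair_dihedral hx2 hx1 braid21 h with
            rfl | rfl | rfl | rfl | rfl | rfl | rfl | rfl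
        · rw [L1] at hLw
          exact absurd hLw (ne_of_lt (by
            calc (0 : Γ) = 0 + 0 + 0 + 0 := by abel
              _ < R := lt4 ha0 hb ha0 hb0))
        · rw [ht'] at hLw
          exact absurd hLw (ne_of_lt (by
            calc a = a + 0 + 0 + 0 := by abel
              _ < R := lt4 le_rfl hb ha0 hb0))
        · rw [hs] at hLw
          exact absurd hLw (ne_of_lt (by
            calc b = 0 + b + 0 + 0 := by abel
              _ < R := lt4 ha0 le_rfl ha0 hb0))
        · rw [Lus] at hLw
          exact absurd hLw (ne_of_lt (by
            calc a + b = a + b + 0 + 0 := by abel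
              _ < R := lt4 le_rfl le_rfl ha0 hb0))
        · rw [Lsu] at hLw
          exact absurd hLw (ne_of_lt (by
            calc b + a = 0 + b + a + 0 := by abel
              _ < R := lt4 ha0 le_rfl le_rfl hb0))
        · rw [Lusu] at hLw
          exact absurd hLw (ne_of_lt (by
            calc a + b + a = a + b + a + 0 := by abel
              _ < R := lt4 le_rfl le_rfl le_rfl hb0))
        · rw [Lsus] at hLw
          exact absurd hLw (ne_of_lt (by
            calc b + a + b = 0 + b + a + b := by abel
              _ < R := lt1 ha0' le_rfl le_rfl le_rfl))
        · exact Or.inr rfl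
    · rintro (rfl | rfl)
      · exact ⟨⟨{0, 1}, ne01, hmtsts⟩, by rw [Ltsts, hν]⟩
      · exact ⟨⟨{1, 2}, ne12, hmusus⟩, by rw [Lusus, hν]⟩

end Stmt12
end
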